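/- arXiv:2210.15223 — 10 statements merged into one kernel-verified Lean document; each statement's English description precedes it below -/
import Mathlib

section
/- Every C_n lattice is atomistic: every element of a C_n lattice is the join of the atoms contained in it. -/
open Finset

variable {α : Type*} [DecidableEq α] [Fintype α]

/-- `B` covers `A` in the family `L` of subsets ordered by inclusion. -/
def CovIn (L : Set (Finset α)) (A B : Finset α) : Prop :=
  A ∈ L ∧ B ∈ L ∧ A ⊂ B ∧ ∀ C ∈ L, A ⊆ C → C ⊆ B → C = A ∨ C = B

/-- An atom of the family `L`: an element covering the least element `∅`. -/
def IsAtomIn (L : Set (Finset α)) (A : Finset α) : Prop := CovIn L ∅ A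

/-- A `C_n` lattice on ground set `E` with (fixed-point-free) involution `star`. -/
structure IsCnLattice (star : α → α) (E : Finset α) (L : Set (Finset α)) : Prop where
  star_invol : Function.Involutive star
  star_ne : ∀ x, star x ≠ x
  star_mem : ∀ x ∈ E, star x ∈ E
  subset_ground : ∀ A ∈ L, A ⊆ E
  empty_mem : (∅ : Finset α) ∈ L
  ground_mem : E ∈ L
  admissible : ∀ A ∈ L, A ≠ E → A ∩ A.image star = ∅
  inter_mem : ∀ A ∈ L, ∀ B ∈ L, A ∩ B ∈ L
  covers_inter : ∀ A ∈ L, ¬ CovIn L A E →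
    ∀ B C, CovIn L A B → CovIn L A C → B ≠ C → B ∩ C = A
  covers_union : ∀ A ∈ L, ¬ CovIn L A E →
    ∀ x, x ∈ E \ A.image star ↔ ∃ B, CovIn L A B ∧ x ∈ B

/-- A maximal chain from `A` to `B` in `L`: a list of successive covers starting
at `A` and ending at `B`. -/
def IsMaxChainIn (L : Set (Finset α)) (A B : Finset α) (c : List (Finset α)) : Prop :=
  c.Chain' (CovIn L) ∧ c.head? = some A ∧ c.getLast? = some B
/-- Every `C_n` lattice is atomistic: every element is the join of
the atoms contained in it (equivalently, since the join of elements of `L` contained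
in `A ∈ L` is at most `A`, the element `A` is the union of the atoms contained in it). -/
theorem cn_atomistic (star : α → α) (E : Finset α) (L : Set (Finset α))
    (h : IsCnLattice star E L) (A : Finset α) (hA : A ∈ L) :
    ∀ x, x ∈ A ↔ ∃ B, IsAtomIn L B ∧ B ⊆ A ∧ x ∈ B := by
  intro x
  constructor
  · intro hx
    -- take B₀ of minimal cardinality in L with x ∈ B₀ ⊆ A
    set T : Set (Finset α) := {C | C ∈ L ∧ x ∈ C ∧ C ⊆ A} with hT
    obtain ⟨B₀, hB₀, hmin⟩ : ∃ a ∈ T, ∀ a' ∈ T, a'.card ≤ a.card → a.card = a'.card :=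
      ((Set.toFinite T).exists_minimalFor Finset.card T
        ⟨A, hA, hx, subset_rfl⟩).imp fun _ hm =>
          ⟨hm.1, fun _ hj hle => le_antisymm (hm.2 hj hle) hle⟩
    obtain ⟨hB₀L, hxB₀, hB₀A⟩ := hB₀
    refine ⟨B₀, ⟨h.empty_mem, hB₀L, ?_, ?_⟩, hB₀A, hxB₀⟩
    · exact Finset.empty_ssubset.mpr ⟨x, hxB₀⟩
    · intro C hCL _ hCB₀
      by_contra hc
      push_neg at hc
      obtain ⟨hC0, hCB⟩ := hc
      have hCssub : C ⊂ B₀ := ⟨hCB₀, fun hle => hCB (Finset.Subset.antisymm hCB₀ hle)⟩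
      -- E does not cover ∅, since C is strictly between
      have hCE : C ≠ E := by
        intro hCE
        have : B₀ ⊆ E := h.subset_ground _ hB₀L
        exact hCB (Finset.Subset.antisymm hCB₀ (hCE ▸ this))
      have hnc : ¬ CovIn L ∅ E := by
        intro hcov
        rcases hcov.2.2.2 C hCL (Finset.empty_subset C) (h.subset_ground _ hCL) with h1 | h1
        · exact hC0.ne_empty h1
        · exact hCE h1
      -- there is an atom B' containing x
      have hxE : x ∈ E \ (∅ : Finset α).image star := by
        simp [h.subset_ground _ hA hx]
      obtain ⟨B', hB'cov, hxB'⟩ := (h.covers_union ∅ h.empty_mem hnc x).mp hxE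
      obtain ⟨-, hB'L, -, hB'max⟩ := hB'cov
      -- B' ∩ B₀ ∈ T, minimality forces B₀ ⊆ B'
      have hIT : B' ∩ B₀ ∈ T :=
        ⟨h.inter_mem _ hB'L _ hB₀L, Finset.mem_inter.mpr ⟨hxB', hxB₀⟩,
          (Finset.inter_subset_right).trans hB₀A⟩
      have hIcard : (B' ∩ B₀).card ≤ B₀.card :=
        Finset.card_le_card Finset.inter_subset_right
      have hIeq : B' ∩ B₀ = B₀ := by
        have := hmin _ hIT hIcard
        exact Finset.eq_of_subset_of_card_le Finset.inter_subset_right (le_of_eq this)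
      have hB₀B' : B₀ ⊆ B' := by
        intro y hy
        have hy' : y ∈ B' ∩ B₀ := hIeq.symm ▸ hy
        exact (Finset.mem_inter.mp hy').1
      have hB₀eq : B₀ = B' := by
        rcases hB'max B₀ hB₀L (Finset.empty_subset _) hB₀B' with h1 | h1
        · exact absurd (h1 ▸ hxB₀) (by simp)
        · exact h1
      rcases hB'max C hCL (Finset.empty_subset _) (hB₀eq ▸ hCB₀) with h1 | h1
      · exact hC0.ne_empty h1
      · exact hCB (h1.trans hB₀eq.symm)
  · rintro ⟨B, -, hBA, hxB⟩
    exact hBA hxB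
end

section
/- Every C_n lattice is graded: for any two elements A < B of a C_n lattice, all maximal chains from A to B have the same length. -/
open Finset

variable {α : Type*} [DecidableEq α] [Fintype α]

section Aux

variable {star : α → α} {E : Finset α} {L : Set (Finset α)}

lemma mem_image_star (h : IsCnLattice star E L) {B : Finset α} {y : α} :
    y ∈ B.image star ↔ star y ∈ B := by
  constructor
  · rintro hy
    obtain ⟨a, ha, rfl⟩ := Finset.mem_image.mp hy
    rwa [h.star_invol a]
  · intro hy
    exact Finset.mem_image.mpr ⟨star y, hy, h.star_invol y⟩

lemma adm_pair (h : IsCnLattice star E L) {V : Finset α} (hV : V ∈ L) (hVE : V ≠ E)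
    {x : α} (hx : x ∈ V) (hx' : star x ∈ V) : False := by
  have hemp := h.admissible V hV hVE
  have hmem : x ∈ V ∩ V.image star :=
    Finset.mem_inter.mpr ⟨hx, (mem_image_star h).mpr hx'⟩
  rw [hemp] at hmem
  exact absurd hmem (Finset.notMem_empty x)

lemma cov_ne_top {A B : Finset α} (hAtop : ¬ CovIn L A E) (hB : CovIn L A B) : B ≠ E :=
  fun e => hAtop (e ▸ hB)

lemma cov_elem (h : IsCnLattice star E L) {A B : Finset α} (hA : A ∈ L)
    (hAtop : ¬CovIn L A E) (hB : CovIn L A B) {x : α} (hx : x ∈ B) :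
    x ∈ E ∧ x ∉ A.image star := by
  have := (h.covers_union A hA hAtop x).mpr ⟨B, hB, hx⟩
  exact Finset.mem_sdiff.mp this

lemma cov_top_unique (h : IsCnLattice star E L) {C D : Finset α} (hCE : CovIn L C E)
    (hD : D ∈ L) (hCD : C ⊂ D) : D = E := by
  rcases hCE.2.2.2 D hD hCD.subset (h.subset_ground D hD) with h1 | h1
  · exact absurd h1.symm hCD.ne
  · exact h1

lemma exists_cov_le (h : IsCnLattice star E L) :
    ∀ D : Finset α, D ∈ L → ∀ X ∈ L, X ⊂ D → ∃ U, CovIn L X U ∧ U ⊆ D := by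
  intro D
  induction D using Finset.strongInduction with
  | _ D ih =>
    intro hD X hX hXD
    by_cases hc : CovIn L X D
    · exact ⟨D, hc, Finset.Subset.refl D⟩
    · have hf : ¬ ∀ C ∈ L, X ⊆ C → C ⊆ D → C = X ∨ C = D := fun hf => hc ⟨hX, hD, hXD, hf⟩
      push_neg at hf
      obtain ⟨C, hC, hXC, hCD, hne1, hne2⟩ := hf
      have hCssD : C ⊂ D := ssubset_of_subset_of_ne hCD hne2
      have hXssC : X ⊂ C := ssubset_of_subset_of_ne hXC (Ne.symm hne1)
      obtain ⟨U, hU, hUC⟩ := ih C hCssD hC X hX hXssC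
      exact ⟨U, hU, hUC.trans hCD⟩

lemma exists_chain_to_top (h : IsCnLattice star E L) :
    ∀ n, ∀ X ∈ L, (E \ X).card ≤ n → ∃ c, IsMaxChainIn L X E c := by
  intro n
  induction n with
  | zero =>
    intro X hX hc
    have hXE : X = E := by
      have hsub := h.subset_ground X hX
      have h0 : E \ X = ∅ := Finset.card_eq_zero.mp (Nat.le_zero.mp hc)
      exact Finset.Subset.antisymm hsub (Finset.sdiff_eq_empty_iff_subset.mp h0)
    subst hXE
    exact ⟨[X], by simp [IsMaxChainIn, List.Chain', List.isChain_singleton]⟩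
  | succ n ih =>
    intro X hX hc
    by_cases hXE : X = E
    · subst hXE; exact ⟨[X], by simp [IsMaxChainIn, List.Chain', List.isChain_singleton]⟩
    · have hXs : X ⊂ E := ssubset_of_subset_of_ne (h.subset_ground X hX) hXE
      obtain ⟨U, hU, hUE⟩ := exists_cov_le h E h.ground_mem X hX hXs
      have hcard : (E \ U).card ≤ n := by
        have hsub2 : E \ U ⊆ E \ X :=
          Finset.sdiff_subset_sdiff (Finset.Subset.refl E) hU.2.2.1.subset
        obtain ⟨u, huU, huX⟩ := Finset.exists_of_ssubset hU.2.2.1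
        have hss : E \ U ⊂ E \ X := by
          refine Finset.ssubset_iff_subset_ne.mpr ⟨hsub2, ?_⟩
          intro e
          have : u ∈ E \ U := by
            rw [e]; exact Finset.mem_sdiff.mpr ⟨hUE huU, huX⟩
          exact (Finset.mem_sdiff.mp this).2 huU
        have := Finset.card_lt_card hss
        omega
      obtain ⟨c, hc1, hc2, hc3⟩ := ih U hU.2.1 hcard
      obtain ⟨t, rfl⟩ : ∃ t, c = U :: t := by
        cases c with
        | nil => simp at hc2
        | cons a t => exact ⟨t, by simp at hc2; rw [hc2]⟩
      refine ⟨X :: U :: t, List.isChain_cons_cons.mpr ⟨hU, hc1⟩, rfl, ?_⟩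
      rwa [List.getLast?_cons_cons]

lemma maxchain_cases {A B : Finset α} {c : List (Finset α)}
    (hc : IsMaxChainIn L A B c) (hAB : A ≠ B) :
    ∃ C t, c = A :: C :: t ∧ CovIn L A C ∧ IsMaxChainIn L C B (C :: t) := by
  obtain ⟨h1, h2, h3⟩ := hc
  cases c with
  | nil => simp at h2
  | cons a t =>
    have ha : a = A := by simpa using h2
    subst ha
    cases t with
    | nil =>
      exfalso
      have : a = B := by simpa using h3
      exact hAB this
    | cons b t' =>
      have hcc := List.isChain_cons_cons.mp h1
      refine ⟨b, t', rfl, hcc.1, hcc.2, rfl, ?_⟩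
      rwa [List.getLast?_cons_cons] at h3

lemma maxchain_cons_cov {C Z : Finset α} {e : List (Finset α)} (hCZ : CovIn L C Z)
    (he : IsMaxChainIn L Z E e) : IsMaxChainIn L C E (C :: e) := by
  obtain ⟨h1, h2, h3⟩ := he
  obtain ⟨t, rfl⟩ : ∃ t, e = Z :: t := by
    cases e with
    | nil => simp at h2
    | cons a t => exact ⟨t, by simp at h2; rw [h2]⟩
  exact ⟨List.isChain_cons_cons.mpr ⟨hCZ, h1⟩, rfl, by rwa [List.getLast?_cons_cons]⟩

lemma maxchain_top (h : IsCnLattice star E L) {c : List (Finset α)}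
    (hc : IsMaxChainIn L E E c) : c = [E] := by
  obtain ⟨h1, h2, h3⟩ := hc
  cases c with
  | nil => simp at h2
  | cons a t =>
    have ha : a = E := by simpa using h2
    subst ha
    cases t with
    | nil => rfl
    | cons b t' =>
      exfalso
      have hcov : CovIn L a b := (List.isChain_cons_cons.mp h1).1
      exact hcov.2.2.1.not_subset (h.subset_ground b hcov.2.1)

lemma maxchain_two (h : IsCnLattice star E L) {C : Finset α} {c : List (Finset α)}
    (hCE : CovIn L C E) (hc : IsMaxChainIn L C E c) : c.length = 2 := by
  have hne : C ≠ E := hCE.2.2.1.ne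
  obtain ⟨D, t, rfl, hcov, hrest⟩ := maxchain_cases hc hne
  have hD : D = E := cov_top_unique h hCE hcov.2.1 hcov.2.2.1
  subst hD
  have h1 := maxchain_top h hrest
  have ht : t = [] := by simpa using h1
  subst ht
  rfl


lemma step_up (h : IsCnLattice star E L) {A X Y : Finset α} (hA : A ∈ L)
    (hAtop : ¬CovIn L A E) (hX : CovIn L A X) (hY : CovIn L A Y)
    (hXE : ¬CovIn L X E) (hy : ∃ y ∈ Y \ A, y ∉ X.image star) :
    ∃ W, CovIn L X W ∧ Y ⊆ W := by
  obtain ⟨y, hyYA, hyX⟩ := hy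
  obtain ⟨hyY, hyA⟩ := Finset.mem_sdiff.mp hyYA
  have hyE : y ∈ E := (cov_elem h hA hAtop hY hyY).1
  obtain ⟨W, hWcov, hyW⟩ :=
    (h.covers_union X hX.2.1 hXE y).mp (Finset.mem_sdiff.mpr ⟨hyE, hyX⟩)
  have hWY : W ∩ Y ∈ L := h.inter_mem W hWcov.2.1 Y hY.2.1
  have hsub1 : A ⊆ W ∩ Y :=
    Finset.subset_inter (hX.2.2.1.subset.trans hWcov.2.2.1.subset) hY.2.2.1.subset
  rcases hY.2.2.2 (W ∩ Y) hWY hsub1 Finset.inter_subset_right with heq | heq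
  · exfalso
    have hm : y ∈ W ∩ Y := Finset.mem_inter.mpr ⟨hyW, hyY⟩
    rw [heq] at hm
    exact hyA hm
  · exact ⟨W, hWcov, fun z hz =>
      Finset.mem_of_mem_inter_left (by rw [heq]; exact hz)⟩

lemma good_pair (h : IsCnLattice star E L) {A X Y : Finset α} (hA : A ∈ L)
    (hAtop : ¬CovIn L A E) (hX : CovIn L A X) (hY : CovIn L A Y) (hXY : X ≠ Y)
    (hp : ∃ y ∈ Y \ A, y ∉ X.image star) (hq : ∃ x ∈ X \ A, x ∉ Y.image star) :
    (∃ Z, CovIn L X Z ∧ CovIn L Y Z) ∨ (CovIn L X E ∧ CovIn L Y E) := by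
  have hinter : X ∩ Y = A := h.covers_inter A hA hAtop X Y hX hY hXY
  have hYnsubX : ¬ Y ⊆ X := by
    intro hs
    have hsub : Y ⊆ A := by
      rw [← hinter]; exact Finset.subset_inter hs (Finset.Subset.refl Y)
    exact hY.2.2.1.not_subset hsub
  have hXnsubY : ¬ X ⊆ Y := by
    intro hs
    have hsub : X ⊆ A := by
      rw [← hinter]; exact Finset.subset_inter (Finset.Subset.refl X) hs
    exact hX.2.2.1.not_subset hsub
  by_cases hXE : CovIn L X E
  · by_cases hYE : CovIn L Y E
    · exact Or.inr ⟨hXE, hYE⟩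
    · exfalso
      obtain ⟨W, hWcov, hXW⟩ := step_up h hA hAtop hY hX hYE hq
      have hXssW : X ⊂ W := ssubset_of_subset_of_ne hXW
        (by rintro rfl; exact hYnsubX hWcov.2.2.1.subset)
      have hWE : W = E := cov_top_unique h hXE hWcov.2.1 hXssW
      rw [hWE] at hWcov
      exact hYE hWcov
  · by_cases hYE : CovIn L Y E
    · exfalso
      obtain ⟨W, hWcov, hYW⟩ := step_up h hA hAtop hX hY hXE hp
      have hYssW : Y ⊂ W := ssubset_of_subset_of_ne hYW
        (by rintro rfl; exact hXnsubY hWcov.2.2.1.subset)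
      have hWE : W = E := cov_top_unique h hYE hWcov.2.1 hYssW
      rw [hWE] at hWcov
      exact hXE hWcov
    · obtain ⟨W, hWcov, hYW⟩ := step_up h hA hAtop hX hY hXE hp
      obtain ⟨W', hW'cov, hXW'⟩ := step_up h hA hAtop hY hX hYE hq
      have hZL : W ∩ W' ∈ L := h.inter_mem W hWcov.2.1 W' hW'cov.2.1
      have hXZ : X ⊆ W ∩ W' := Finset.subset_inter hWcov.2.2.1.subset hXW'
      have hYZ : Y ⊆ W ∩ W' := Finset.subset_inter hYW hW'cov.2.2.1.subset
      have hZW : W ∩ W' = W := by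
        rcases hWcov.2.2.2 (W ∩ W') hZL hXZ Finset.inter_subset_left with e | e
        · exfalso; rw [e] at hYZ; exact hYnsubX hYZ
        · exact e
      have hZW' : W ∩ W' = W' := by
        rcases hW'cov.2.2.2 (W ∩ W') hZL hYZ Finset.inter_subset_right with e | e
        · exfalso; rw [e] at hXZ; exact hXnsubY hXZ
        · exact e
      exact Or.inl ⟨W ∩ W', by rw [hZW]; exact hWcov, by rw [hZW']; exact hW'cov⟩

lemma bad_pair_small_top (h : IsCnLattice star E L) {A P Q : Finset α} (hA : A ∈ L)
    (hAtop : ¬CovIn L A E) (hP : CovIn L A P) (hQ : CovIn L A Q)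
    (hbad : ∀ q ∈ Q \ A, q ∈ P.image star)
    (hex : ∃ p ∈ P \ A, p ∉ Q.image star) : CovIn L Q E := by
  by_contra hQE
  obtain ⟨W, hWcov, hPW⟩ := step_up h hA hAtop hQ hP hQE hex
  have hWE : W ≠ E := fun e => hQE (e ▸ hWcov)
  obtain ⟨q₀, hq₀Q, hq₀A⟩ := Finset.exists_of_ssubset hQ.2.2.1
  have h1 : q₀ ∈ P.image star := hbad q₀ (Finset.mem_sdiff.mpr ⟨hq₀Q, hq₀A⟩)
  have h2 : star q₀ ∈ P := (mem_image_star h).mp h1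
  exact adm_pair h hWcov.2.1 hWE (hWcov.2.2.1.subset hq₀Q) (hPW h2)

lemma two_covers (h : IsCnLattice star E L) {A X Y : Finset α} (hA : A ∈ L)
    (hAtop : ¬CovIn L A E) (hX : CovIn L A X) (hY : CovIn L A Y)
    (hbad : ∀ y ∈ Y \ A, y ∈ X.image star)
    (honly : ∀ W, CovIn L A W → W = X ∨ W = Y) : CovIn L X E := by
  have hXne : X ≠ E := cov_ne_top hAtop hX
  have hXssE : X ⊂ E := ssubset_of_subset_of_ne (h.subset_ground X hX.2.1) hXne
  obtain ⟨V, hVcov, hVE⟩ := exists_cov_le h E h.ground_mem X hX.2.1 hXssE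
  have hVeq : V = E := by
    by_contra hne
    obtain ⟨v, hvV, hvX⟩ := Finset.exists_of_ssubset hVcov.2.2.1
    have hvA : v ∉ A := fun hv => hvX (hX.2.2.1.subset hv)
    have hvAs : v ∉ A.image star := by
      intro hv
      exact adm_pair h hVcov.2.1 hne hvV
        (hVcov.2.2.1.subset (hX.2.2.1.subset ((mem_image_star h).mp hv)))
    obtain ⟨B, hBcov, hvB⟩ :=
      (h.covers_union A hA hAtop v).mp (Finset.mem_sdiff.mpr ⟨hVE hvV, hvAs⟩)
    rcases honly B hBcov with rfl | rfl
    · exact hvX hvB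
    · have hb := hbad v (Finset.mem_sdiff.mpr ⟨hvB, hvA⟩)
      exact adm_pair h hVcov.2.1 hne hvV (hVcov.2.2.1.subset ((mem_image_star h).mp hb))
  rw [hVeq] at hVcov
  exact hVcov

lemma third_good (h : IsCnLattice star E L) {A X Y W : Finset α} (hA : A ∈ L)
    (hAtop : ¬CovIn L A E) (hX : CovIn L A X) (hY : CovIn L A Y) (hW : CovIn L A W)
    (hWY : W ≠ Y) (hnq : ∀ x ∈ X \ A, x ∈ Y.image star) :
    (∃ w ∈ W \ A, w ∉ X.image star) ∧ (∃ x ∈ X \ A, x ∉ W.image star) := by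
  have hWYinter : W ∩ Y = A := h.covers_inter A hA hAtop W Y hW hY hWY
  constructor
  · by_contra hcon
    push_neg at hcon
    obtain ⟨w, hwW, hwA⟩ := Finset.exists_of_ssubset hW.2.2.1
    have h1 : w ∈ X.image star := hcon w (Finset.mem_sdiff.mpr ⟨hwW, hwA⟩)
    have h2 : star w ∈ X := (mem_image_star h).mp h1
    have h3 : star w ∉ A := by
      intro hsw
      exact (cov_elem h hA hAtop hW hwW).2 ((mem_image_star h).mpr hsw)
    have h4 : star w ∈ Y.image star := hnq (star w) (Finset.mem_sdiff.mpr ⟨h2, h3⟩)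
    have h5 : w ∈ Y := by
      have := (mem_image_star h).mp h4
      rwa [h.star_invol w] at this
    have h6 : w ∈ W ∩ Y := Finset.mem_inter.mpr ⟨hwW, h5⟩
    rw [hWYinter] at h6
    exact hwA h6
  · by_contra hcon
    push_neg at hcon
    obtain ⟨x, hxX, hxA⟩ := Finset.exists_of_ssubset hX.2.2.1
    have h1 : star x ∈ W := (mem_image_star h).mp (hcon x (Finset.mem_sdiff.mpr ⟨hxX, hxA⟩))
    have h3 : star x ∈ Y := (mem_image_star h).mp (hnq x (Finset.mem_sdiff.mpr ⟨hxX, hxA⟩))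
    have h6 : star x ∈ W ∩ Y := Finset.mem_inter.mpr ⟨h1, h3⟩
    rw [hWYinter] at h6
    exact (cov_elem h hA hAtop hX hxX).2 ((mem_image_star h).mpr h6)

lemma all_covers_top (h : IsCnLattice star E L) {A Y : Finset α} (hA : A ∈ L)
    (hAtop : ¬CovIn L A E) (hY : CovIn L A Y) (hYE : CovIn L Y E) :
    ∀ B, CovIn L A B → CovIn L B E := by
  intro B hB
  by_cases hBY : B = Y
  · subst hBY; exact hYE
  by_cases hp : ∃ y ∈ Y \ A, y ∉ B.image star
  · by_cases hq : ∃ b ∈ B \ A, b ∉ Y.image star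
    · rcases good_pair h hA hAtop hY hB (Ne.symm hBY) hq hp with ⟨Z, hZY, hZB⟩ | ⟨_, hh⟩
      · have hZE : Z = E := cov_top_unique h hYE hZY.2.1 hZY.2.2.1
        rwa [hZE] at hZB
      · exact hh
    · push_neg at hq
      exact bad_pair_small_top h hA hAtop hY hB hq hp
  · push_neg at hp
    by_contra hBE
    have hBne : B ≠ E := cov_ne_top hAtop hB
    have hBssE : B ⊂ E := ssubset_of_subset_of_ne (h.subset_ground B hB.2.1) hBne
    obtain ⟨V, hVcov, hVsub⟩ := exists_cov_le h E h.ground_mem B hB.2.1 hBssE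
    have hVE : V ≠ E := fun e => hBE (e ▸ hVcov)
    have hYnsubV : ¬ Y ⊆ V := by
      intro hs
      obtain ⟨y₀, hy₀Y, hy₀A⟩ := Finset.exists_of_ssubset hY.2.2.1
      have h1 : star y₀ ∈ B :=
        (mem_image_star h).mp (hp y₀ (Finset.mem_sdiff.mpr ⟨hy₀Y, hy₀A⟩))
      exact adm_pair h hVcov.2.1 hVE (hs hy₀Y) (hVcov.2.2.1.subset h1)
    obtain ⟨v, hvV, hvB⟩ := Finset.exists_of_ssubset hVcov.2.2.1
    have hvA : v ∉ A := fun hv => hvB (hB.2.2.1.subset hv)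
    have hvAs : v ∉ A.image star := by
      intro hv
      exact adm_pair h hVcov.2.1 hVE hvV
        (hVcov.2.2.1.subset (hB.2.2.1.subset ((mem_image_star h).mp hv)))
    obtain ⟨Bv, hBvcov, hvBv⟩ :=
      (h.covers_union A hA hAtop v).mp (Finset.mem_sdiff.mpr ⟨hVsub hvV, hvAs⟩)
    have hBvV : Bv ⊆ V := by
      have hm : Bv ∩ V ∈ L := h.inter_mem Bv hBvcov.2.1 V hVcov.2.1
      have hsub : A ⊆ Bv ∩ V := Finset.subset_inter hBvcov.2.2.1.subset
        (hB.2.2.1.subset.trans hVcov.2.2.1.subset)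
      rcases hBvcov.2.2.2 (Bv ∩ V) hm hsub Finset.inter_subset_left with e | e
      · exfalso
        have hm2 : v ∈ Bv ∩ V := Finset.mem_inter.mpr ⟨hvBv, hvV⟩
        rw [e] at hm2
        exact hvA hm2
      · intro z hz
        have : z ∈ Bv ∩ V := by rw [e]; exact hz
        exact Finset.mem_of_mem_inter_right this
    have hBvB : Bv ≠ B := fun e => hvB (e ▸ hvBv)
    have hBvY : Bv ≠ Y := fun e => hYnsubV (e ▸ hBvV)
    have g1 : ∃ t ∈ Bv \ A, t ∉ Y.image star := by
      refine ⟨v, Finset.mem_sdiff.mpr ⟨hvBv, hvA⟩, ?_⟩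
      intro hv
      have h1 : star v ∈ Y := (mem_image_star h).mp hv
      have h2 : star v ∉ A := fun hsv => hvAs ((mem_image_star h).mpr hsv)
      have h3 : star v ∈ B.image star := hp (star v) (Finset.mem_sdiff.mpr ⟨h1, h2⟩)
      have h4 : v ∈ B := by
        have := (mem_image_star h).mp h3
        rwa [h.star_invol v] at this
      exact hvB h4
    have g2 : ∃ y ∈ Y \ A, y ∉ Bv.image star := by
      obtain ⟨y₁, hy₁Y, hy₁A⟩ := Finset.exists_of_ssubset hY.2.2.1
      refine ⟨y₁, Finset.mem_sdiff.mpr ⟨hy₁Y, hy₁A⟩, ?_⟩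
      intro hy
      have h1 : star y₁ ∈ Bv := (mem_image_star h).mp hy
      have h2 : star y₁ ∈ B :=
        (mem_image_star h).mp (hp y₁ (Finset.mem_sdiff.mpr ⟨hy₁Y, hy₁A⟩))
      have h3 : star y₁ ∈ B ∩ Bv := Finset.mem_inter.mpr ⟨h2, h1⟩
      rw [h.covers_inter A hA hAtop B Bv hB hBvcov (Ne.symm hBvB)] at h3
      exact (cov_elem h hA hAtop hY hy₁Y).2 ((mem_image_star h).mpr h3)
    have hcovBvE : CovIn L Bv E := by
      rcases good_pair h hA hAtop hY hBvcov (Ne.symm hBvY) g1 g2 with ⟨Z, hZY, hZBv⟩ | ⟨_, hh⟩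
      · have hZE : Z = E := cov_top_unique h hYE hZY.2.1 hZY.2.2.1
        rwa [hZE] at hZBv
      · exact hh
    have hBvV' : Bv ≠ V := by
      intro e
      have hs : B ⊆ Bv := by rw [e]; exact hVcov.2.2.1.subset
      have hs2 : B ⊆ B ∩ Bv := Finset.subset_inter (Finset.Subset.refl B) hs
      rw [h.covers_inter A hA hAtop B Bv hB hBvcov (Ne.symm hBvB)] at hs2
      exact hB.2.2.1.not_subset hs2
    rcases hcovBvE.2.2.2 V hVcov.2.1 hBvV hVsub with e | e
    · exact hBvV' e.symm
    · exact hVE e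


lemma chains_top (h : IsCnLattice star E L) :
    ∀ n, ∀ A ∈ L, (E \ A).card ≤ n →
      ∀ c₁ c₂, IsMaxChainIn L A E c₁ → IsMaxChainIn L A E c₂ →
        c₁.length = c₂.length := by
  intro n
  induction n with
  | zero =>
    intro A hA hcard c₁ c₂ h1 h2
    have hAE : A = E := by
      have hsub := h.subset_ground A hA
      have h0 : E \ A = ∅ := Finset.card_eq_zero.mp (Nat.le_zero.mp hcard)
      exact Finset.Subset.antisymm hsub (Finset.sdiff_eq_empty_iff_subset.mp h0)
    subst hAE
    rw [maxchain_top h h1, maxchain_top h h2]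
  | succ n ih =>
    intro A hA hcard c₁ c₂ h1 h2
    by_cases hAE : A = E
    · subst hAE
      rw [maxchain_top h h1, maxchain_top h h2]
    obtain ⟨C₁, t₁, rfl, hcov₁, hd₁⟩ := maxchain_cases h1 hAE
    obtain ⟨C₂, t₂, rfl, hcov₂, hd₂⟩ := maxchain_cases h2 hAE
    suffices key : (C₁ :: t₁).length = (C₂ :: t₂).length by
      simpa using key
    have hcsub : ∀ C, CovIn L A C → (E \ C).card ≤ n := by
      intro C hC
      have hCE : C ⊆ E := h.subset_ground C hC.2.1
      have hsub2 : E \ C ⊆ E \ A :=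
        Finset.sdiff_subset_sdiff (Finset.Subset.refl E) hC.2.2.1.subset
      obtain ⟨u, huC, huA⟩ := Finset.exists_of_ssubset hC.2.2.1
      have hss : E \ C ⊂ E \ A := by
        refine Finset.ssubset_iff_subset_ne.mpr ⟨hsub2, ?_⟩
        intro e
        have hm : u ∈ E \ C := by
          rw [e]; exact Finset.mem_sdiff.mpr ⟨hCE huC, huA⟩
        exact (Finset.mem_sdiff.mp hm).2 huC
      have := Finset.card_lt_card hss
      omega
    have ihc : ∀ C, CovIn L A C → ∀ d d', IsMaxChainIn L C E d →
        IsMaxChainIn L C E d' → d.length = d'.length :=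
      fun C hC => ih C hC.2.1 (hcsub C hC)
    by_cases hAtop : CovIn L A E
    · have e1 : C₁ = E := cov_top_unique h hAtop hcov₁.2.1 hcov₁.2.2.1
      have e2 : C₂ = E := cov_top_unique h hAtop hcov₂.2.1 hcov₂.2.2.1
      subst e1; subst e2
      rw [maxchain_top h hd₁, maxchain_top h hd₂]
    have adjEq : ∀ C C' Z d d', CovIn L A C → CovIn L A C' → CovIn L C Z →
        CovIn L C' Z → IsMaxChainIn L C E d → IsMaxChainIn L C' E d' →
        d.length = d'.length := by
      intro C C' Z d d' hC hC' hCZ hC'Z hd hd'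
      obtain ⟨e, he⟩ := exists_chain_to_top h (E \ Z).card Z hCZ.2.1 le_rfl
      have l1 := ihc C hC d (C :: e) hd (maxchain_cons_cov hCZ he)
      have l2 := ihc C' hC' d' (C' :: e) hd' (maxchain_cons_cov hC'Z he)
      rw [l1, l2]
      rfl
    by_cases hCC : C₁ = C₂
    · subst hCC
      exact ihc C₁ hcov₁ _ _ hd₁ hd₂
    by_cases hsome : ∃ C, CovIn L A C ∧ CovIn L C E
    · obtain ⟨C₀, hC₀, hC₀E⟩ := hsome
      have hE₁ := all_covers_top h hA hAtop hC₀ hC₀E C₁ hcov₁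
      have hE₂ := all_covers_top h hA hAtop hC₀ hC₀E C₂ hcov₂
      rw [maxchain_two h hE₁ hd₁, maxchain_two h hE₂ hd₂]
    push_neg at hsome
    by_cases hp : ∃ y ∈ C₂ \ A, y ∉ C₁.image star
    · by_cases hq : ∃ x ∈ C₁ \ A, x ∉ C₂.image star
      · rcases good_pair h hA hAtop hcov₁ hcov₂ hCC hp hq with ⟨Z, hZ1, hZ2⟩ | ⟨hh, _⟩
        · exact adjEq C₁ C₂ Z _ _ hcov₁ hcov₂ hZ1 hZ2 hd₁ hd₂
        · exact absurd hh (hsome C₁ hcov₁)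
      · push_neg at hq
        exact absurd (bad_pair_small_top h hA hAtop hcov₂ hcov₁ hq hp) (hsome C₁ hcov₁)
    · push_neg at hp
      by_cases hq : ∃ x ∈ C₁ \ A, x ∉ C₂.image star
      · exact absurd (bad_pair_small_top h hA hAtop hcov₁ hcov₂ hp hq) (hsome C₂ hcov₂)
      · push_neg at hq
        by_cases hW : ∀ W, CovIn L A W → W = C₁ ∨ W = C₂
        · exact absurd (two_covers h hA hAtop hcov₁ hcov₂ hp hW) (hsome C₁ hcov₁)
        · push_neg at hW
          obtain ⟨W, hWcov, hW1, hW2⟩ := hW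
          obtain ⟨g1a, g1b⟩ := third_good h hA hAtop hcov₁ hcov₂ hWcov hW2 hq
          obtain ⟨g2a, g2b⟩ := third_good h hA hAtop hcov₂ hcov₁ hWcov hW1 hp
          obtain ⟨eW, heW⟩ := exists_chain_to_top h (E \ W).card W hWcov.2.1 le_rfl
          rcases good_pair h hA hAtop hcov₁ hWcov (fun e => hW1 e.symm) g1a g1b with
            ⟨Z, hZ1, hZ2⟩ | ⟨hh, _⟩
          · rcases good_pair h hA hAtop hcov₂ hWcov (fun e => hW2 e.symm) g2a g2b with
              ⟨Z', hZ1', hZ2'⟩ | ⟨hh, _⟩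
            · have e1 := adjEq C₁ W Z _ _ hcov₁ hWcov hZ1 hZ2 hd₁ heW
              have e2 := adjEq C₂ W Z' _ _ hcov₂ hWcov hZ1' hZ2' hd₂ heW
              rw [e1, e2]
            · exact absurd hh (hsome C₂ hcov₂)
          · exact absurd hh (hsome C₁ hcov₁)

lemma maxchain_append {A B : Finset α} {c d : List (Finset α)}
    (hc : IsMaxChainIn L A B c) (hd : IsMaxChainIn L B E d) :
    IsMaxChainIn L A E (c ++ d.tail) := by
  obtain ⟨hc1, hc2, hc3⟩ := hc
  obtain ⟨hd1, hd2, hd3⟩ := hd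
  obtain ⟨t, rfl⟩ : ∃ t, d = B :: t := by
    cases d with
    | nil => simp at hd2
    | cons a t => exact ⟨t, by simp at hd2; rw [hd2]⟩
  cases t with
  | nil =>
    have hBE : B = E := by simpa using hd3
    subst hBE
    simpa using ⟨hc1, hc2, hc3⟩
  | cons u t' =>
    have hBu := List.isChain_cons_cons.mp hd1
    refine ⟨?_, ?_, ?_⟩
    · apply List.IsChain.append hc1 hBu.2
      intro x hx y hy
      rw [hc3] at hx
      simp only [Option.mem_some_iff] at hx
      simp only [List.head?_cons, Option.mem_some_iff] at hy
      subst hx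
      subst hy
      exact hBu.1
    · obtain ⟨s, rfl⟩ : ∃ s, c = A :: s := by
        cases c with
        | nil => simp at hc2
        | cons a s => exact ⟨s, by simp at hc2; rw [hc2]⟩
      rfl
    · rw [List.tail_cons]
      have hne : (u :: t') ≠ ([] : List (Finset α)) := by simp
      rw [List.getLast?_append_of_ne_nil c hne]
      rwa [List.getLast?_cons_cons] at hd3

end Aux

/-- Every `C_n` lattice is graded: for any two elements `A < B` of the
lattice, all maximal chains from `A` to `B` have the same length. -/
theorem cn_graded (star : α → α) (E : Finset α) (L : Set (Finset α))
    (h : IsCnLattice star E L) (A B : Finset α) (hA : A ∈ L) (hB : B ∈ L) (hAB : A ⊂ B)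
    (c₁ c₂ : List (Finset α))
    (hc₁ : IsMaxChainIn L A B c₁) (hc₂ : IsMaxChainIn L A B c₂) :
    c₁.length = c₂.length := by
  obtain ⟨d, hd⟩ := exists_chain_to_top h (E \ B).card B hB le_rfl
  have h1 := maxchain_append hc₁ hd
  have h2 := maxchain_append hc₂ hd
  have := chains_top h (E \ A).card A hA le_rfl _ _ h1 h2
  simp only [List.length_append] at this
  omega
end

section
/- If A is an atom of a C_n lattice 𝓛 of rank at least 3, then A* is also an atom of 𝓛. -/
open Finset

variable {α : Type*} [DecidableEq α] [Fintype α]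

lemma img_img {star : α → α} (hs : Function.Involutive star) (S : Finset α) :
    (S.image star).image star = S := by
  rw [Finset.image_image, hs.comp_self, Finset.image_id]

/-- If `A` is an atom of a `C_n` lattice of rank at least `3`
(i.e. some maximal chain from `∅` to the top `E` has at least three cover steps),
then `A*` is also an atom. -/
theorem cn_star_atom (star : α → α) (E : Finset α) (L : Set (Finset α))
    (h : IsCnLattice star E L)
    (hrank : ∃ c : List (Finset α), IsMaxChainIn L ∅ E c ∧ 4 ≤ c.length)
    (A : Finset α) (hA : IsAtomIn L A) :
    IsAtomIn L (A.image star) := by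
  classical
  have hground := h.subset_ground
  -- extract the first four elements of the chain
  obtain ⟨c, ⟨hch, hhd, -⟩, hlen⟩ := hrank
  rcases c with - | ⟨a0, - | ⟨b, - | ⟨d, - | ⟨e, rest⟩⟩⟩⟩ <;> simp at hlen
  simp only [List.Chain', List.isChain_cons_cons] at hch
  obtain ⟨h01, h12, h23, -⟩ := hch
  have ha0 : a0 = (∅ : Finset α) := by simpa using hhd
  subst ha0
  have hb : CovIn L ∅ b := h01
  have hbd : CovIn L b d := h12
  have hdE : d ⊂ E := lt_of_lt_of_le h23.2.2.1 (hground e h23.2.1)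
  -- ∅ is not covered by E
  have h0 : ¬ CovIn L ∅ E := by
    intro hc
    rcases hc.2.2.2 b hb.2.1 (empty_subset _) (hground b hb.2.1) with h' | h'
    · exact hb.2.2.1.ne' h'
    · exact hdE.ne (le_antisymm hdE.subset (h' ▸ hbd.2.2.1.subset))
  -- every element of E lies in an atom
  have mem_atom : ∀ x ∈ E, ∃ P, CovIn L ∅ P ∧ x ∈ P := by
    intro x hx
    have := (h.covers_union ∅ h.empty_mem h0 x).mp
    simpa using this (by simpa using hx)
  -- distinct atoms are disjoint
  have atoms_disj : ∀ P Q, CovIn L ∅ P → CovIn L ∅ Q → P ≠ Q → P ∩ Q = ∅ :=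
    fun P Q hP hQ hne => h.covers_inter ∅ h.empty_mem h0 P Q hP hQ hne
  -- an atom meeting a member of L is contained in it
  have atom_sub : ∀ Q, CovIn L ∅ Q → ∀ S ∈ L, (Q ∩ S).Nonempty → Q ⊆ S := by
    intro Q hQ S hS hne
    rcases hQ.2.2.2 (Q ∩ S) (h.inter_mem Q hQ.2.1 S hS) (empty_subset _)
      inter_subset_left with h' | h'
    · rw [h'] at hne; exact absurd hne (by simp)
    · exact Finset.inter_eq_left.mp h'
  -- atoms are nonempty
  have atom_ne : ∀ P, CovIn L ∅ P → P.Nonempty := fun P hP =>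
    Finset.nonempty_iff_ne_empty.mpr (fun h' => hP.2.2.1.ne (h'.symm))
  -- no atom is covered by E
  have no_atom_cov : ∀ P, CovIn L ∅ P → ¬ CovIn L P E := by
    intro P hP hPE
    obtain ⟨q, hqd, hqb⟩ := Finset.exists_of_ssubset hbd.2.2.1
    obtain ⟨Q, hQ, hqQ⟩ := mem_atom q (hground d hbd.2.1 hqd)
    have hQd : Q ⊆ d := atom_sub Q hQ d hbd.2.1 ⟨q, Finset.mem_inter.mpr ⟨hqQ, hqd⟩⟩
    -- b and Q are not atoms covered by E, helper facts
    have hbd_ne : b ≠ d := hbd.2.2.1.ne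
    have hbE : ¬ CovIn L b E := by
      intro hc
      rcases hc.2.2.2 d hbd.2.1 hbd.2.2.1.subset hdE.subset with h' | h'
      · exact hbd_ne h'.symm
      · exact hdE.ne h'
    have hQ_ne_d : Q ≠ d := by
      intro h'
      have hbQ : b ≠ Q := fun hbq => hqb (by rw [hbq]; exact hqQ)
      rcases hQ.2.2.2 b hb.2.1 (empty_subset _) (h' ▸ hbd.2.2.1.subset) with h'' | h''
      · exact hb.2.2.1.ne' h''
      · exact hbQ h''
    have hQE : ¬ CovIn L Q E := by
      intro hc
      rcases hc.2.2.2 d hbd.2.1 hQd hdE.subset with h' | h'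
      · exact hQ_ne_d h'.symm
      · exact hdE.ne h'
    have hPb : b ≠ P := by
      intro h'
      rcases hPE.2.2.2 d hbd.2.1 (h' ▸ hbd.2.2.1.subset) hdE.subset with h'' | h''
      · exact hbd_ne (h' ▸ h'').symm
      · exact hdE.ne h''
    have hPQ : Q ≠ P := by
      intro h'
      rcases hPE.2.2.2 d hbd.2.1 (h' ▸ hQd) hdE.subset with h'' | h''
      · exact hQ_ne_d (h' ▸ h'').symm
      · exact hdE.ne h''
    -- the key step: P ⊆ R* for any atom R ≠ P not covered by E
    have step : ∀ R, CovIn L ∅ R → R ≠ P → ¬ CovIn L R E → P ⊆ R.image star := by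
      intro R hR hRP hRE p hp
      by_contra hps
      have hpE : p ∈ E := hground P hP.2.1 hp
      obtain ⟨D, hD, hpD⟩ := (h.covers_union R hR.2.1 hRE p).mp
        (Finset.mem_sdiff.mpr ⟨hpE, hps⟩)
      have hPD : P ⊆ D := atom_sub P hP D hD.2.1 ⟨p, Finset.mem_inter.mpr ⟨hp, hpD⟩⟩
      rcases hPE.2.2.2 D hD.2.1 hPD (hground D hD.2.1) with h' | h'
      · -- D = P, so R ⊆ P, contradicting disjointness
        have hRsub : R ⊆ P := h' ▸ hD.2.2.1.subset
        have hdisj := atoms_disj R P hR hP hRP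
        obtain ⟨r, hr⟩ := atom_ne R hR
        have : r ∈ R ∩ P := Finset.mem_inter.mpr ⟨hr, hRsub hr⟩
        rw [hdisj] at this; exact absurd this (Finset.notMem_empty r)
      · exact hRE (h' ▸ hD)
    have h1 : P ⊆ b.image star := step b hb hPb hbE
    have h2 : P ⊆ Q.image star := step Q hQ hPQ hQE
    have h1' : P.image star ⊆ b := by
      have := Finset.image_subset_image (f := star) h1
      rwa [img_img h.star_invol] at this
    have h2' : P.image star ⊆ Q := by
      have := Finset.image_subset_image (f := star) h2
      rwa [img_img h.star_invol] at this
    have hQb : b ≠ Q := fun h' => hqb (h' ▸ hqQ)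
    obtain ⟨p, hp⟩ := atom_ne P hP
    have hps : star p ∈ b ∩ Q := Finset.mem_inter.mpr
      ⟨h1' (Finset.mem_image_of_mem star hp), h2' (Finset.mem_image_of_mem star hp)⟩
    rw [atoms_disj b Q hb hQ hQb] at hps
    exact absurd hps (Finset.notMem_empty _)
  -- KEY: an atom meeting P* is contained in P*
  have key : ∀ P Q, CovIn L ∅ P → CovIn L ∅ Q → (Q ∩ P.image star).Nonempty →
      Q ⊆ P.image star := by
    rintro P Q hP hQ ⟨q, hq⟩ y hy
    by_contra hys
    have hyE : y ∈ E := hground Q hQ.2.1 hy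
    obtain ⟨D, hD, hyD⟩ := (h.covers_union P hP.2.1 (no_atom_cov P hP) y).mp
      (Finset.mem_sdiff.mpr ⟨hyE, hys⟩)
    have hQD : Q ⊆ D := atom_sub Q hQ D hD.2.1 ⟨y, Finset.mem_inter.mpr ⟨hy, hyD⟩⟩
    have hDE : D ≠ E := fun he => no_atom_cov P hP (he ▸ hD)
    have hadm := h.admissible D hD.2.1 hDE
    have hq1 : q ∈ Q := (Finset.mem_inter.mp hq).1
    have hq2 : q ∈ P.image star := (Finset.mem_inter.mp hq).2
    have : q ∈ D ∩ D.image star := Finset.mem_inter.mpr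
      ⟨hQD hq1, Finset.image_subset_image hD.2.2.1.subset hq2⟩
    rw [hadm] at this
    exact absurd this (Finset.notMem_empty q)
  -- main argument
  obtain ⟨a, ha⟩ := atom_ne A hA
  have haE : star a ∈ E := h.star_mem a (hground A hA.2.1 ha)
  obtain ⟨B, hB, haB⟩ := mem_atom (star a) haE
  have h1 : B ⊆ A.image star := key A B hA hB
    ⟨star a, Finset.mem_inter.mpr ⟨haB, Finset.mem_image_of_mem star ha⟩⟩
  have h2 : B.image star ⊆ A := by
    have := Finset.image_subset_image (f := star) h1
    rwa [img_img h.star_invol] at this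
  obtain ⟨b0, hb0⟩ := atom_ne B hB
  have h3 : A ⊆ B.image star := key B A hB hA
    ⟨star b0, Finset.mem_inter.mpr ⟨h2 (Finset.mem_image_of_mem star hb0),
      Finset.mem_image_of_mem star hb0⟩⟩
  have h4 : A.image star ⊆ B := by
    have := Finset.image_subset_image (f := star) h3
    rwa [img_img h.star_invol] at this
  have heq : A.image star = B := subset_antisymm h4 h1
  exact heq ▸ hB
end

section
/- In a finite bounded lattice 𝓛 with a linear order ω on its atoms for which a set I of atoms is NBB, if the rank of the join of I \ {a} equals the rank of the join of I for every a ∈ I, then I is not NBB for any linear order; equivalently, every NBB set I (for some linear order) contains an atom a with rank(⋁(I \ {a})) < rank(⋁I). -/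
variable {L : Type*} [Lattice L] [BoundedOrder L] [Fintype L] [DecidableEq L]

/-- The set `D` of atoms is bounded below (BB) with respect to the strict order `ω`
on the atoms: `D` is nonempty and some atom `a` is a strict `ω`-lower bound of every
element of `D` with `a ≤ ⋁ D`. -/
def BddBel (ω : {a : L // IsAtom a} → {a : L // IsAtom a} → Prop)
    (D : Finset {a : L // IsAtom a}) : Prop :=
  D.Nonempty ∧ ∃ a : {a : L // IsAtom a}, (∀ d ∈ D, ω a d) ∧
    (a : L) ≤ D.sup (Subtype.val)

/-- `B` is NBB with respect to `ω` if it contains no bounded below subset. -/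
def IsNBB (ω : {a : L // IsAtom a} → {a : L // IsAtom a} → Prop)
    (B : Finset {a : L // IsAtom a}) : Prop :=
  ∀ D ⊆ B, ¬ BddBel ω D

/-- A set of atoms is independent if it is NBB for some linear (strict total) order
on the atoms. -/
def IndepSet (B : Finset {a : L // IsAtom a}) : Prop :=
  ∃ ω : {a : L // IsAtom a} → {a : L // IsAtom a} → Prop,
    IsStrictTotalOrder _ ω ∧ IsNBB ω B

/-- `r` is the rank function of the graded lattice `L`. -/
def IsRankFn (r : L → ℕ) : Prop :=
  r ⊥ = 0 ∧ ∀ a b : L, a ⋖ b → r b = r a + 1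

/-- `L` is atomistic: every element is a join of atoms. -/
def AtomisticL (L : Type*) [Lattice L] [BoundedOrder L] [DecidableEq L] : Prop :=
  ∀ x : L, ∃ S : Finset {a : L // IsAtom a}, x = S.sup Subtype.val

/-- A rank function is strictly monotone. -/
lemma rankFn_strictMono (r : L → ℕ) (hr : IsRankFn r) : StrictMono r := by
  intro x y hxy
  induction y using WellFoundedLT.induction with
  | ind y IH =>
    obtain ⟨z, hxz, hzy⟩ := exists_le_covBy_of_lt hxy
    have hy := hr.2 z y hzy
    rcases eq_or_lt_of_le hxz with rfl | hlt
    · omega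
    · have := IH z hzy.lt hlt
      omega

/-- In a finite, bounded, atomistic, graded lattice, every (nonempty)
independent set `I` of atoms contains an atom `a` with
`rank(⋁(I \ {a})) < rank(⋁ I)`; equivalently, if the rank of the join of `I \ {a}`
equals the rank of the join of `I` for every `a ∈ I`, then `I` is NBB for no linear order. -/
theorem indep_has_rank_dropping_atom (r : L → ℕ) (hr : IsRankFn r)
    (hatom : AtomisticL L) (I : Finset {a : L // IsAtom a}) (hne : I.Nonempty)
    (hI : IndepSet I) :
    ∃ a ∈ I, r ((I.erase a).sup Subtype.val) < r (I.sup Subtype.val) := by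
  obtain ⟨ω, hsto, hnbb⟩ := hI
  haveI : IsTrans _ ω := hsto.toIsTrans
  haveI : IsIrrefl _ ω := hsto.toIsStrictOrder.toIrrefl
  have wf : WellFounded ω := Finite.wellFounded_of_trans_of_irrefl ω
  -- take the ω-minimal element of I
  obtain ⟨a, haI, hmin⟩ := wf.has_min I (by exact_mod_cast hne)
  refine ⟨a, haI, ?_⟩
  have hωa : ∀ d ∈ I.erase a, ω a d := by
    intro d hd
    rcases @trichotomous _ ω hsto.toTrichotomous a d with h | h | h
    · exact h
    · exact absurd h.symm (Finset.ne_of_mem_erase hd)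
    · exact absurd h (hmin d (Finset.mem_of_mem_erase hd))
  -- a is not below the join of the rest
  have hnle : ¬ (a : L) ≤ (I.erase a).sup Subtype.val := by
    intro hle
    rcases (I.erase a).eq_empty_or_nonempty with he | hne'
    · rw [he, Finset.sup_empty] at hle
      exact a.2.1 (le_bot_iff.mp hle)
    · exact hnbb (I.erase a) (Finset.erase_subset a I) ⟨hne', a, hωa, hle⟩
  have hlt : (I.erase a).sup Subtype.val < I.sup Subtype.val := by
    refine lt_of_le_of_ne (Finset.sup_mono (Finset.erase_subset a I)) ?_
    intro heq
    exact hnle (heq ▸ Finset.le_sup (f := Subtype.val) haI)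
  exact rankFn_strictMono r hr hlt
end

section
/- In a finite, bounded, atomistic, graded lattice, every independent set I (i.e., set of atoms that is NBB for some linear order on the atoms) satisfies rank(⋁I) ≥ |I|. -/
variable {L : Type*} [Lattice L] [BoundedOrder L] [Fintype L] [DecidableEq L]

lemma rank_lt_of_lt {L : Type*} [Lattice L] [BoundedOrder L] [Fintype L]
    (r : L → ℕ) (hr : IsRankFn r) : ∀ x y : L, x < y → r x < r y := by
  have : WellFoundedGT L := inferInstance
  intro x y hxy
  induction x using WellFoundedGT.induction with
  | _ x ih =>
    obtain ⟨z, hxz, hzy⟩ := exists_covBy_le_of_lt hxy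
    have hz : r z = r x + 1 := hr.2 x z hxz
    rcases eq_or_lt_of_le hzy with rfl | hlt
    · omega
    · have := ih z hxz.lt hlt
      omega

lemma nbb_card_le_rank {L : Type*} [Lattice L] [BoundedOrder L] [Fintype L] [DecidableEq L]
    (r : L → ℕ) (hr : IsRankFn r)
    (ω : {a : L // IsAtom a} → {a : L // IsAtom a} → Prop)
    (hto : IsStrictTotalOrder _ ω) :
    ∀ I : Finset {a : L // IsAtom a}, IsNBB ω I → I.card ≤ r (I.sup Subtype.val) := by
  haveI := hto.toTrichotomous
  haveI : IsTrans _ ω := inferInstance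
  haveI : IsIrrefl _ ω := inferInstance
  have hwf : WellFounded ω := Finite.wellFounded_of_trans_of_irrefl ω
  intro I
  induction I using Finset.strongInduction with
  | _ I ih =>
    intro hnbb
    rcases Finset.eq_empty_or_nonempty I with rfl | hne
    · simp
    · obtain ⟨a, haI, hamin⟩ := hwf.has_min ↑I hne
      have haI : a ∈ I := haI
      set I' := I.erase a with hI'
      have hsub : I' ⊆ I := Finset.erase_subset a I
      have hssub : I' ⊂ I := Finset.erase_ssubset haI
      have hnbb' : IsNBB ω I' := fun D hD => hnbb D (hD.trans hsub)
      have hωa : ∀ d ∈ I', ω a d := by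
        intro d hd
        have hdI : d ∈ I := hsub hd
        have hda : d ≠ a := Finset.ne_of_mem_erase hd
        rcases trichotomous_of ω a d with h | h | h
        · exact h
        · exact absurd h.symm hda
        · exact absurd h (hamin d hdI)
      have hnle : ¬ ((a : L) ≤ I'.sup Subtype.val) := by
        intro hle
        rcases Finset.eq_empty_or_nonempty I' with he | hne'
        · rw [he] at hle
          simp only [Finset.sup_empty, le_bot_iff] at hle
          exact a.2.1 hle
        · exact hnbb I' hsub ⟨hne', a, hωa, hle⟩
      have hlt : I'.sup Subtype.val < I.sup Subtype.val := by
        refine lt_of_le_of_ne (Finset.sup_mono hsub) fun h => hnle ?_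
        rw [h]
        exact Finset.le_sup haI
      have h1 : I'.card ≤ r (I'.sup Subtype.val) := ih I' hssub hnbb'
      have h2 := rank_lt_of_lt r hr _ _ hlt
      have h3 : I'.card + 1 = I.card := Finset.card_erase_add_one haI
      omega

/-- In a finite, bounded, atomistic, graded lattice, every
independent set `I` satisfies `rank(⋁ I) ≥ |I|`. -/
theorem indep_card_le_rank (r : L → ℕ) (hr : IsRankFn r)
    (hatom : AtomisticL L) (I : Finset {a : L // IsAtom a}) (hI : IndepSet I) :
    I.card ≤ r (I.sup Subtype.val) := by
  obtain ⟨ω, hto, hnbb⟩ := hI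
  exact nbb_card_le_rank r hr ω hto I hnbb
end

section
/- If I is an independent set in a finite, bounded, atomistic, graded lattice 𝓛 and a is an atom with rank(⋁I) < rank(⋁(I ∪ {a})), then I ∪ {a} is also independent. -/
variable {L : Type*} [Lattice L] [BoundedOrder L] [Fintype L] [DecidableEq L]

/-- If `I` is an independent set in a finite, bounded, atomistic,
graded lattice and `a` is an atom with `rank(⋁ I) < rank(⋁(I ∪ {a}))`, then
`I ∪ {a}` is also independent. -/
theorem indep_insert (r : L → ℕ) (hr : IsRankFn r) (hatom : AtomisticL L)
    (I : Finset {a : L // IsAtom a}) (hI : IndepSet I) (a : {a : L // IsAtom a})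
    (hrank : r (I.sup Subtype.val) < r ((insert a I).sup Subtype.val)) :
    IndepSet (insert a I) := by
  obtain ⟨ω, hto, hnbb⟩ := hI
  have hna : ¬ (a : L) ≤ I.sup Subtype.val := by
    intro h
    rw [Finset.sup_insert, sup_eq_right.mpr h] at hrank
    exact lt_irrefl _ hrank
  set ω' : {x : L // IsAtom x} → {x : L // IsAtom x} → Prop :=
    fun x y => y ≠ a ∧ (x = a ∨ ω x y) with hω'
  have htri : IsTrichotomous _ ω' := by
    suffices h : ∀ x y, ω' x y ∨ x = y ∨ ω' y x from ⟨fun x y h1 h2 => ((h x y).resolve_left h1).resolve_right h2⟩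
    intro x y
    by_cases hxy : x = y
    · exact Or.inr (Or.inl hxy)
    by_cases hx : x = a
    · exact Or.inl ⟨fun h => hxy (hx.trans h.symm), Or.inl hx⟩
    by_cases hy : y = a
    · exact Or.inr (Or.inr ⟨hx, Or.inl hy⟩)
    · rcases @trichotomous _ ω hto.toTrichotomous x y with h | h | h
      · exact Or.inl ⟨hy, Or.inr h⟩
      · exact Or.inr (Or.inl h)
      · exact Or.inr (Or.inr ⟨hx, Or.inr h⟩)
  have hirr : IsIrrefl _ ω' := by
    constructor
    intro x hx
    rcases hx.2 with rfl | h
    · exact hx.1 rfl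
    · exact hto.irrefl x h
  have htr : IsTrans _ ω' := by
    constructor
    rintro x y z ⟨hy, hxy⟩ ⟨hz, hyz⟩
    refine ⟨hz, ?_⟩
    rcases hxy with rfl | hxy
    · exact Or.inl rfl
    · rcases hyz with rfl | hyz
      · exact absurd rfl hy
      · exact Or.inr (hto.trans _ _ _ hxy hyz)
  refine ⟨ω', { toTrichotomous := htri,
                toIsStrictOrder := { toIrrefl := hirr, toIsTrans := htr } }, ?_⟩
  rintro D hD ⟨hne, b, hb, hble⟩
  have hDI : D ⊆ I := by
    intro d hd
    rcases Finset.mem_insert.mp (hD hd) with h | h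
    · exact absurd h (hb d hd).1
    · exact h
  by_cases hba : b = a
  · subst hba
    exact hna (hble.trans (Finset.sup_mono hDI))
  · exact hnbb D hDI ⟨hne, b,
      fun d hd => ((hb d hd).2).resolve_left hba, hble⟩
end

section
/- In a finite, bounded, atomistic, graded lattice 𝓛, for every element X the rank of X equals the maximum size of an independent set of atoms whose join is X. -/
set_option linter.unusedSectionVars false
set_option maxHeartbeats 1000000


variable {L : Type*} [Lattice L] [BoundedOrder L] [Fintype L] [DecidableEq L]

def asup (t : List {a : L // IsAtom a}) : L := t.foldr (fun a y => a.val ⊔ y) ⊥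

@[simp] lemma asup_nil : asup ([] : List {a : L // IsAtom a}) = ⊥ := rfl

@[simp] lemma asup_cons (a : {a : L // IsAtom a}) (t : List {a : L // IsAtom a}) :
    asup (a :: t) = a.val ⊔ asup t := rfl

lemma asup_append (t u : List {a : L // IsAtom a}) : asup (t ++ u) = asup t ⊔ asup u := by
  induction t with
  | nil => simp
  | cons a t ih => simp [ih, sup_assoc]

lemma asup_take_le (t : List {a : L // IsAtom a}) (i : ℕ) : asup (t.take i) ≤ asup t := by
  conv_rhs => rw [← List.take_append_drop i t]
  rw [asup_append]; exact le_sup_left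

lemma asup_mono_take (t : List {a : L // IsAtom a}) {i j : ℕ} (hij : i ≤ j) :
    asup (t.take i) ≤ asup (t.take j) := by
  have : t.take i = (t.take j).take i := by rw [List.take_take, Nat.min_eq_left hij]
  rw [this]; exact asup_take_le _ _

lemma asup_toFinset (t : List {a : L // IsAtom a}) :
    t.toFinset.sup Subtype.val = asup t := by
  induction t with
  | nil => simp
  | cons a t ih => simp [Finset.sup_insert, ih]

open Classical in
noncomputable def levfun (s : List {a : L // IsAtom a}) (b : {a : L // IsAtom a}) : ℕ :=
  Nat.find (⟨s.length + 1, Or.inr rfl⟩ :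
    ∃ i, ((b : L) ≤ asup (s.take i) ∨ i = s.length + 1))

open Classical in
lemma levfun_spec (s : List {a : L // IsAtom a}) (b : {a : L // IsAtom a}) :
    (b : L) ≤ asup (s.take (levfun s b)) ∨ levfun s b = s.length + 1 := by
  unfold levfun
  exact Nat.find_spec (p := fun i => ((b : L) ≤ asup (s.take i) ∨ i = s.length + 1)) _

open Classical in
lemma levfun_le {s : List {a : L // IsAtom a}} {b : {a : L // IsAtom a}} {j : ℕ}
    (h : (b : L) ≤ asup (s.take j)) : levfun s b ≤ j := by
  unfold levfun
  exact Nat.find_le (p := fun i => ((b : L) ≤ asup (s.take i) ∨ i = s.length + 1)) (Or.inl h)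

open Classical in
lemma levfun_not {s : List {a : L // IsAtom a}} {b : {a : L // IsAtom a}} {j : ℕ}
    (hj : j < levfun s b) : ¬ (b : L) ≤ asup (s.take j) := by
  unfold levfun at hj
  exact fun h => absurd (Or.inl h) (Nat.find_min _ hj)

open Classical in
noncomputable def gf (s : List {a : L // IsAtom a}) (b : {a : L // IsAtom a}) : ℕ :=
  if s[levfun s b - 1]? = some b then 0
  else ((Fintype.equivFin {a : L // IsAtom a}) b).val + 1

open Classical in
lemma gf_inj {s : List {a : L // IsAtom a}} {b c : {a : L // IsAtom a}}
    (hl : levfun s b = levfun s c) (hg : gf s b = gf s c) : b = c := by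
  unfold gf at hg
  split_ifs at hg with h1 h2 h2
  all_goals first
    | (rw [hl] at h1; exact Option.some.inj (h1.symm.trans h2))
    | exact (Nat.succ_ne_zero _ hg.symm).elim
    | exact (Nat.succ_ne_zero _ hg).elim
    | exact (Fintype.equivFin _).injective (Fin.val_injective (Nat.succ_injective hg))

open Classical in
lemma gf_eq_zero {s : List {a : L // IsAtom a}} {b : {a : L // IsAtom a}}
    (h : s[levfun s b - 1]? = some b) : gf s b = 0 := by
  unfold gf; rw [if_pos h]

def om (s : List {a : L // IsAtom a}) (b c : {a : L // IsAtom a}) : Prop :=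
  levfun s c < levfun s b ∨ (levfun s b = levfun s c ∧ gf s b < gf s c)

lemma om_sto (s : List {a : L // IsAtom a}) :
    IsStrictTotalOrder {a : L // IsAtom a} (om s) := by
  have htri : IsTrichotomous {a : L // IsAtom a} (om s) := by
    refine ⟨fun b c hbc hcb => ?_⟩
    have key : om s b c ∨ b = c ∨ om s c b := by
      rcases lt_trichotomy (levfun s b) (levfun s c) with h | h | h
      · exact Or.inr (Or.inr (Or.inl h))
      · rcases lt_trichotomy (gf s b) (gf s c) with h' | h' | h'
        · exact Or.inl (Or.inr ⟨h, h'⟩)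
        · exact Or.inr (Or.inl (gf_inj h h'))
        · exact Or.inr (Or.inr (Or.inr ⟨h.symm, h'⟩))
      · exact Or.inl (Or.inl h)
    exact (key.resolve_left hbc).resolve_right hcb
  have hirr : IsIrrefl {a : L // IsAtom a} (om s) := by
    constructor
    intro b hb
    rcases hb with h | ⟨_, h⟩ <;> omega
  have htr : IsTrans {a : L // IsAtom a} (om s) := by
    constructor
    rintro a b c (h1 | ⟨h1, h1'⟩) (h2 | ⟨h2, h2'⟩)
    · exact Or.inl (by omega)
    · exact Or.inl (by omega)
    · exact Or.inl (by omega)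
    · exact Or.inr ⟨by omega, by omega⟩
  exact { toTrichotomous := htri, toIsStrictOrder := { toIrrefl := hirr, toIsTrans := htr } }

lemma exists_le_cov {a b : L} (h : a < b) : ∃ c, a ≤ c ∧ c ⋖ b := by
  classical
  obtain ⟨c, hc, hmax⟩ := Finset.exists_maximal
    (s := Finset.univ.filter (fun z => a ≤ z ∧ z < b)) ⟨a, by simp [h]⟩
  simp only [Finset.mem_filter, Finset.mem_univ, true_and] at hc hmax
  refine ⟨c, hc.1, hc.2, fun z hcz hzb => ?_⟩
  exact hcz.not_ge (hmax ⟨hc.1.trans hcz.le, hzb⟩ hcz.le)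

lemma exists_chain {r : L → ℕ} (hr : IsRankFn r) (hatom : AtomisticL L) :
    ∀ X : L, ∃ s : List {a : L // IsAtom a}, s.length = r X ∧ asup s = X ∧
      ∀ i < s.length, asup (s.take i) ⋖ asup (s.take (i + 1)) := by
  intro X
  induction X using WellFoundedLT.induction with
  | _ X IH =>
    rcases eq_or_ne X ⊥ with rfl | hX
    · exact ⟨[], by simp [hr.1], by simp, by simp⟩
    · have hbot : (⊥ : L) < X := bot_lt_iff_ne_bot.mpr hX
      obtain ⟨Y, -, hYX⟩ := exists_le_cov hbot
      obtain ⟨S, hS⟩ := hatom X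
      have hex : ∃ a ∈ S, ¬ (a.val ≤ Y) := by
        by_contra h; push_neg at h
        exact absurd (hS ▸ Finset.sup_le h) hYX.lt.not_ge
      obtain ⟨a, haS, haY⟩ := hex
      have haX : a.val ≤ X := hS ▸ Finset.le_sup haS
      have hYa : Y ⊔ a.val = X := by
        have h1 : Y < Y ⊔ a.val :=
          lt_of_le_of_ne le_sup_left (fun h => haY (h ▸ le_sup_right))
        have h2 : Y ⊔ a.val ≤ X := sup_le hYX.le haX
        by_contra hne
        exact hYX.2 h1 (lt_of_le_of_ne h2 hne)
      obtain ⟨s, hlen, hsup, hcov⟩ := IH Y hYX.lt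
      have hslen : (s ++ [a]).length = s.length + 1 := by simp
      refine ⟨s ++ [a], ?_, ?_, ?_⟩
      · rw [hslen, hlen, hr.2 Y X hYX]
      · rw [asup_append, hsup]; simpa using hYa
      · intro i hi
        rw [hslen] at hi
        rcases Nat.lt_or_ge i s.length with h | h
        · rw [List.take_append_of_le_length h.le, List.take_append_of_le_length h]
          exact hcov i h
        · have hieq : i = s.length := by omega
          subst hieq
          have e1 : (s ++ [a]).take s.length = s := by
            rw [List.take_append_of_le_length le_rfl, List.take_length]
          have e2 : (s ++ [a]).take (s.length + 1) = s ++ [a] := by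
            apply List.take_of_length_le; simp
          rw [e1, e2, asup_append, hsup]
          have ha1 : asup [a] = a.val := by simp
          rw [ha1, hYa]
          exact hYX

lemma exists_indep {r : L → ℕ} (hr : IsRankFn r) (hatom : AtomisticL L) (X : L) :
    ∃ I : Finset {a : L // IsAtom a}, IndepSet I ∧ I.sup Subtype.val = X ∧ I.card = r X := by
  classical
  obtain ⟨s, hlen, hsupX, hcov⟩ := exists_chain hr hatom X
  have hstep : ∀ i (hi : i < s.length),
      asup (s.take (i + 1)) = asup (s.take i) ⊔ (s.get ⟨i, hi⟩).val := by
    intro i hi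
    calc asup (s.take (i + 1)) = asup (s.take i ++ [s.get ⟨i, hi⟩]) := by
          rw [List.take_succ, List.getElem?_eq_getElem hi]
          simp [List.get_eq_getElem]
      _ = asup (s.take i) ⊔ (s.get ⟨i, hi⟩).val := by rw [asup_append]; simp
  have hgetle : ∀ i (hi : i < s.length), (s.get ⟨i, hi⟩).val ≤ asup (s.take (i + 1)) :=
    fun i hi => by rw [hstep i hi]; exact le_sup_right
  have hgetnle : ∀ i (hi : i < s.length), ¬ (s.get ⟨i, hi⟩).val ≤ asup (s.take i) := by
    intro i hi hle
    have hc := (hcov i hi).lt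
    rw [hstep i hi, sup_eq_left.mpr hle] at hc
    exact lt_irrefl _ hc
  have hlget : ∀ i (hi : i < s.length), levfun s (s.get ⟨i, hi⟩) = i + 1 := by
    intro i hi
    have h1 : levfun s (s.get ⟨i, hi⟩) ≤ i + 1 := levfun_le (hgetle i hi)
    have h2 : ¬ levfun s (s.get ⟨i, hi⟩) ≤ i := by
      intro h
      rcases levfun_spec s (s.get ⟨i, hi⟩) with hle | he
      · exact hgetnle i hi (hle.trans (asup_mono_take s h))
      · omega
    omega
  have hnd : s.Nodup := by
    rw [List.nodup_iff_injective_get]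
    intro i j hij
    have h1 : levfun s (s.get i) = i.1 + 1 := hlget i.1 i.2
    have h2 : levfun s (s.get j) = j.1 + 1 := hlget j.1 j.2
    rw [hij] at h1
    exact Fin.ext (by omega)
  have hg0 : ∀ i (hi : i < s.length), gf s (s.get ⟨i, hi⟩) = 0 := by
    intro i hi
    apply gf_eq_zero
    rw [hlget i hi]
    simp only [Nat.add_sub_cancel]
    rw [List.getElem?_eq_getElem hi]
    simp [List.get_eq_getElem]
  have hnbb : IsNBB (om s) s.toFinset := by
    rintro D hD ⟨hne, a, hlb, hle⟩
    obtain ⟨d0, hd0D, hmax⟩ := Finset.exists_max_image D (levfun s) hne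
    have hmem : ∀ d ∈ D, ∃ i, ∃ hi : i < s.length, s.get ⟨i, hi⟩ = d := by
      intro d hd
      obtain ⟨i, hi⟩ := List.mem_iff_get.mp (List.mem_toFinset.mp (hD hd))
      exact ⟨i.1, i.2, hi⟩
    have hdle : ∀ d ∈ D, (d : L) ≤ asup (s.take (levfun s d0)) := by
      intro d hd
      obtain ⟨i, hi, rfl⟩ := hmem d hd
      have hdx : (s.get ⟨i, hi⟩ : L) ≤ asup (s.take (levfun s (s.get ⟨i, hi⟩))) := by
        rw [hlget i hi]; exact hgetle i hi
      exact hdx.trans (asup_mono_take s (hmax _ hd))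
    have hsupD : D.sup Subtype.val ≤ asup (s.take (levfun s d0)) := Finset.sup_le hdle
    have hla : levfun s a ≤ levfun s d0 := levfun_le (hle.trans hsupD)
    obtain ⟨i, hi, hgi⟩ := hmem d0 hd0D
    have hgd0 : gf s d0 = 0 := by rw [← hgi]; exact hg0 i hi
    rcases hlb d0 hd0D with h | ⟨h1, h2⟩
    · omega
    · omega
  refine ⟨s.toFinset, ⟨om s, om_sto s, hnbb⟩, ?_, ?_⟩
  · exact (asup_toFinset s).trans hsupX
  · rw [List.toFinset_card_of_nodup hnd, hlen]

lemma rankFn_lt {r : L → ℕ} (hr : IsRankFn r) : ∀ b a : L, a < b → r a < r b := by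
  intro b
  induction b using WellFoundedLT.induction with
  | _ b IH =>
    intro a hab
    obtain ⟨c, hac, hcb⟩ := exists_le_cov hab
    rw [hr.2 c b hcb]
    rcases eq_or_lt_of_le hac with rfl | hlt
    · omega
    · have := IH c hcb.lt a hlt; omega

lemma nbb_card_le {r : L → ℕ} (hr : IsRankFn r)
    (ω : {a : L // IsAtom a} → {a : L // IsAtom a} → Prop)
    (hsto : IsStrictTotalOrder _ ω) :
    ∀ B : Finset {a : L // IsAtom a}, IsNBB ω B → B.card ≤ r (B.sup Subtype.val) := by
  classical
  intro B
  induction B using Finset.strongInduction with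
  | _ B IH =>
    intro hB
    rcases B.eq_empty_or_nonempty with rfl | hne
    · simp
    · haveI := hsto
      have hwf : WellFounded ω := Finite.wellFounded_of_trans_of_irrefl ω
      obtain ⟨a, haB, hmin⟩ := hwf.has_min ↑B (Finset.coe_nonempty.mpr hne)
      have hlb : ∀ d ∈ B, d ≠ a → ω a d := by
        intro d hd hda
        rcases trichotomous_of ω a d with h | h | h
        · exact h
        · exact absurd h.symm hda
        · exact absurd h (hmin d hd)
      set B' := B.erase a with hB'
      have hsub : B' ⊂ B := Finset.erase_ssubset haB
      have hsuple : B'.sup Subtype.val ≤ B.sup Subtype.val :=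
        Finset.sup_mono (Finset.erase_subset _ _)
      have hne2 : B'.sup Subtype.val ≠ B.sup Subtype.val := by
        intro heq
        rcases B'.eq_empty_or_nonempty with hBe | hBne
        · have hBa : B = {a} := by
            rcases (Finset.erase_eq_empty_iff _ _).mp hBe with h | h
            · exact absurd h (Finset.nonempty_iff_ne_empty.mp hne)
            · exact h
          rw [hBe, hBa] at heq
          simpa using (a.2.1 (by simpa using heq.symm))
        · refine hB B' hsub.subset ⟨hBne, a, ?_, ?_⟩
          · intro d hd
            exact hlb d (Finset.mem_of_mem_erase hd) (Finset.ne_of_mem_erase hd)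
          · rw [heq]; exact Finset.le_sup haB
      have hlt : B'.sup Subtype.val < B.sup Subtype.val := lt_of_le_of_ne hsuple hne2
      have h1 : B'.card ≤ r (B'.sup Subtype.val) :=
        IH B' hsub (fun D hD => hB D (hD.trans hsub.subset))
      have h2 : r (B'.sup Subtype.val) < r (B.sup Subtype.val) := rankFn_lt hr _ _ hlt
      have h3 : B'.card + 1 = B.card := Finset.card_erase_add_one haB
      omega

/-- In a finite, bounded, atomistic, graded lattice, for every
element `X` the rank of `X` is the maximum size of an independent set of atoms
whose join is `X`. -/
theorem rank_eq_max_indep (r : L → ℕ) (hr : IsRankFn r) (hatom : AtomisticL L)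
    (X : L) :
    IsGreatest {n : ℕ | ∃ I : Finset {a : L // IsAtom a},
      IndepSet I ∧ I.sup Subtype.val = X ∧ I.card = n} (r X) := by
  constructor
  · obtain ⟨I, h1, h2, h3⟩ := exists_indep hr hatom X
    exact ⟨I, h1, h2, h3⟩
  · rintro m ⟨I, ⟨ω, hsto, hnbb⟩, hsup, rfl⟩
    have h := nbb_card_le hr ω hsto I hnbb
    rwa [hsup] at h
end

section
/- A finite, bounded, atomistic, graded lattice 𝓛 is geometric (i.e., its rank function is submodular) if and only if every independent set I of 𝓛 satisfies rank(⋁I) = |I|. -/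
variable {L : Type*} [Lattice L] [BoundedOrder L] [Fintype L] [DecidableEq L]

namespace GeomAux

variable {r : L → ℕ}

open Classical in
lemma exists_covby_le {u v : L} (h : u < v) : ∃ z, u ⋖ z ∧ z ≤ v := by
  obtain ⟨z, hz, hmin⟩ := Finset.exists_minimal
    (s := Finset.univ.filter (fun w => u < w ∧ w ≤ v)) ⟨v, by simp [h]⟩
  simp only [Finset.mem_filter, Finset.mem_univ, true_and] at hz hmin
  exact ⟨z, ⟨hz.1, fun w hw1 hw2 => hw2.not_ge (hmin ⟨hw1, hw2.le.trans hz.2⟩ hw2.le)⟩, hz.2⟩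

lemma rank_lt_of_lt (hr : IsRankFn r) : ∀ u v : L, u < v → r u < r v := by
  have wf : WellFounded ((· > ·) : L → L → Prop) := wellFounded_gt
  intro u
  induction u using wf.induction with
  | _ u IH =>
    intro v huv
    obtain ⟨z, hz, hzv⟩ := exists_covby_le huv
    have h1 : r z = r u + 1 := hr.2 u z hz
    rcases eq_or_lt_of_le hzv with rfl | hlt
    · omega
    · have := IH z hz.lt v hlt; omega

lemma rank_mono (hr : IsRankFn r) {u v : L} (h : u ≤ v) : r u ≤ r v := by
  rcases eq_or_lt_of_le h with rfl | h
  · exact le_rfl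
  · exact (rank_lt_of_lt hr u v h).le

lemma eq_of_rank_le (hr : IsRankFn r) {u v : L} (h : u ≤ v) (h2 : r v ≤ r u) : u = v := by
  rcases eq_or_lt_of_le h with rfl | h
  · rfl
  · exact absurd (rank_lt_of_lt hr u v h) (by omega)

lemma rank_atom (hr : IsRankFn r) {a : L} (h : IsAtom a) : r a = 1 := by
  have h1 := hr.2 ⊥ a h.bot_covBy
  have h2 := hr.1
  omega

/-- In an atomistic lattice every cover is achieved by joining an atom. -/
lemma covby_sup_atom (hatom : AtomisticL L) {u z : L} (h : u ⋖ z) :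
    ∃ a : {a : L // IsAtom a}, ¬ (a : L) ≤ u ∧ u ⊔ (a : L) = z := by
  obtain ⟨S, hS⟩ := hatom z
  have hex : ∃ a ∈ S, ¬ (a : L) ≤ u := by
    by_contra hc
    push_neg at hc
    exact absurd (hS ▸ Finset.sup_le hc) (not_le_of_gt h.lt)
  obtain ⟨a, haS, hau⟩ := hex
  have haz : (a : L) ≤ z := hS ▸ Finset.le_sup haS
  have h1 : u < u ⊔ (a : L) := left_lt_sup.mpr hau
  have h2 : u ⊔ (a : L) ≤ z := sup_le h.lt.le haz
  rcases eq_or_lt_of_le h2 with he | hlt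
  · exact ⟨a, hau, he⟩
  · exact absurd hlt (h.2 h1)

/-- The "one-step" condition: joining an atom increases rank by at most one. -/
def Star (r : L → ℕ) : Prop := ∀ (x : L) (a : {a : L // IsAtom a}), r (x ⊔ (a : L)) ≤ r x + 1

lemma submodular_of_star (hr : IsRankFn r) (hatom : AtomisticL L) (hstar : Star r) :
    ∀ x y : L, r (x ⊓ y) + r (x ⊔ y) ≤ r x + r y := by
  have key : ∀ u v x : L, u ≤ v → r (x ⊔ v) + r u ≤ r (x ⊔ u) + r v := by
    have wf : WellFounded ((· > ·) : L → L → Prop) := wellFounded_gt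
    intro u
    induction u using wf.induction with
    | _ u IH =>
      intro v x huv
      rcases eq_or_lt_of_le huv with rfl | hlt
      · exact le_rfl
      · obtain ⟨z, hz, hzv⟩ := exists_covby_le hlt
        obtain ⟨a, _, hsup⟩ := covby_sup_atom hatom hz
        have h1 : r z = r u + 1 := hr.2 u z hz
        have h2 : r (x ⊔ z) ≤ r (x ⊔ u) + 1 := by
          rw [← hsup, ← sup_assoc]; exact hstar (x ⊔ u) a
        have h3 := IH z hz.lt v x hzv
        omega
  intro x y
  have := key (x ⊓ y) y x inf_le_right
  rw [sup_inf_self] at this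
  omega

lemma rank_sup_le_card (hr : IsRankFn r) (hstar : Star r) (S : Finset {a : L // IsAtom a}) :
    r (S.sup Subtype.val) ≤ S.card := by
  induction S using Finset.induction with
  | empty => simp [hr.1]
  | @insert a S haS IH =>
    rw [Finset.sup_insert, Finset.card_insert_of_notMem haS, sup_comm]
    exact le_trans (hstar _ a) (by omega)

/-- ω-minimum of a nonempty finset for a strict total order. -/
lemma exists_omega_min {α : Type*} (ω : α → α → Prop) [DecidableEq α]
    (hsto : IsStrictTotalOrder α ω) :
    ∀ s : Finset α, s.Nonempty → ∃ a ∈ s, ∀ b ∈ s, b ≠ a → ω a b := by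
  intro s
  induction s using Finset.induction with
  | empty => rintro ⟨x, hx⟩; exact absurd hx (Finset.notMem_empty x)
  | @insert c s hc IH =>
    intro _
    rcases s.eq_empty_or_nonempty with rfl | hne
    · refine ⟨c, Finset.mem_insert_self c _, fun b hb hbc => ?_⟩
      rcases Finset.mem_insert.mp hb with rfl | hbs
      · exact absurd rfl hbc
      · exact absurd hbs (Finset.notMem_empty b)
    · obtain ⟨a, has, hamin⟩ := IH hne
      rcases @trichotomous _ ω hsto.toTrichotomous c a with hca | rfl | hac
      · refine ⟨c, Finset.mem_insert_self c _, fun b hb hbc => ?_⟩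
        rcases Finset.mem_insert.mp hb with rfl | hbs
        · exact absurd rfl hbc
        · by_cases hba : b = a
          · exact hba ▸ hca
          · exact hsto.trans _ _ _ hca (hamin b hbs hba)
      · refine ⟨c, Finset.mem_insert_self c _, fun b hb hba => ?_⟩
        rcases Finset.mem_insert.mp hb with rfl | hbs
        · exact absurd rfl hba
        · exact hamin b hbs hba
      · refine ⟨a, Finset.mem_insert_of_mem has, fun b hb hba => ?_⟩
        rcases Finset.mem_insert.mp hb with rfl | hbs
        · exact hac
        · exact hamin b hbs hba

/-- Forward core: under Star, every independent set is geometric. -/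
lemma rank_eq_card_of_indep (hr : IsRankFn r) (hstar : Star r)
    {I : Finset {a : L // IsAtom a}} (hI : IndepSet I) :
    r (I.sup Subtype.val) = I.card := by
  obtain ⟨ω, hsto, hnbb⟩ := hI
  by_contra hne
  have hlt : r (I.sup Subtype.val) < I.card :=
    lt_of_le_of_ne (rank_sup_le_card hr hstar I) hne
  classical
  set T := I.powerset.filter (fun J => r (J.sup Subtype.val) < J.card) with hT
  have hIT : I ∈ T := by simp [hT, hlt]
  obtain ⟨J, hJT, hJmin⟩ := T.exists_min_image Finset.card ⟨I, hIT⟩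
  simp only [hT, Finset.mem_filter, Finset.mem_powerset] at hJT
  obtain ⟨hJI, hJlt⟩ := hJT
  have hJne : J.Nonempty := by
    rcases J.eq_empty_or_nonempty with rfl | h
    · simp [hr.1] at hJlt
    · exact h
  have hJ2 : 2 ≤ J.card := by
    by_contra hcon
    push_neg at hcon
    have h1 : J.card = 1 := by have := hJne.card_pos; omega
    obtain ⟨j, rfl⟩ := Finset.card_eq_one.mp h1
    rw [Finset.sup_singleton, rank_atom hr j.2, Finset.card_singleton] at hJlt
    omega
  have herase : ∀ j ∈ J, r ((J.erase j).sup Subtype.val) = J.card - 1 := by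
    intro j hj
    have hcard : (J.erase j).card = J.card - 1 := Finset.card_erase_of_mem hj
    have hle : r ((J.erase j).sup Subtype.val) ≤ J.card - 1 :=
      hcard ▸ rank_sup_le_card hr hstar _
    have hge : ¬ r ((J.erase j).sup Subtype.val) < (J.erase j).card := by
      intro hcon
      have hmem : J.erase j ∈ T := by
        simp only [hT, Finset.mem_filter, Finset.mem_powerset]
        exact ⟨(J.erase_subset j).trans hJI, hcon⟩
      have := hJmin _ hmem
      omega
    omega
  have hle : ∀ j ∈ J, (j : L) ≤ (J.erase j).sup Subtype.val := by
    intro j hj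
    have h1 : (J.erase j).sup Subtype.val ≤ J.sup Subtype.val :=
      Finset.sup_mono (J.erase_subset j)
    have h2 : r (J.sup Subtype.val) ≤ r ((J.erase j).sup Subtype.val) := by
      have := herase j hj
      omega
    have heq : (J.erase j).sup Subtype.val = J.sup Subtype.val := eq_of_rank_le hr h1 h2
    have : (j : L) ≤ J.sup Subtype.val := Finset.le_sup hj
    exact heq ▸ this
  obtain ⟨a, haJ, hamin⟩ := exists_omega_min ω hsto J hJne
  refine hnbb (J.erase a) ((J.erase_subset a).trans hJI) ⟨?_, a, ?_, hle a haJ⟩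
  · rw [← Finset.card_pos, Finset.card_erase_of_mem haJ]; omega
  · intro d hd
    exact hamin d (Finset.mem_of_mem_erase hd) (Finset.ne_of_mem_erase hd)

/-- A minimal spanning set of atoms is independent (choose an order putting its
elements first). -/
lemma indep_of_min {J : Finset {a : L // IsAtom a}}
    (hmin : ∀ j ∈ J, ¬ (j : L) ≤ (J.erase j).sup Subtype.val) : IndepSet J := by
  classical
  obtain ⟨g, hg⟩ := Countable.exists_injective_nat {a : L // IsAtom a}
  set f : {a : L // IsAtom a} → ℕ ×ₗ ℕ :=
    fun a => toLex ((if a ∈ J then 0 else 1 : ℕ), g a) with hf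
  have hfinj : Function.Injective f := by
    intro a b hab
    apply hg
    have := congrArg (fun p => (ofLex p).2) hab
    simpa [hf] using this
  haveI h1 : IsIrrefl _ (fun a b => f a < f b) := ⟨fun a => lt_irrefl (f a)⟩
  haveI h2 : IsTrans _ (fun a b => f a < f b) := ⟨fun a b c hab hbc => lt_trans hab hbc⟩
  haveI h3 : IsTrichotomous _ (fun a b => f a < f b) := by
    constructor
    intro a b hab hba
    rcases lt_trichotomy (f a) (f b) with h | h | h
    · exact absurd h hab
    · exact hfinj h
    · exact absurd h hba
  haveI h4 : IsStrictOrder _ (fun a b => f a < f b) := ⟨⟩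
  refine ⟨fun a b => f a < f b, ⟨⟩, ?_⟩
  rintro D hD ⟨⟨d0, hd0⟩, a, hwa, hwle⟩
  by_cases haJ : a ∈ J
  · have haD : a ∉ D := fun h => lt_irrefl (f a) (hwa a h)
    have hsub : D ⊆ J.erase a := by
      intro d hd
      exact Finset.mem_erase.mpr ⟨fun he => haD (he ▸ hd), hD hd⟩
    exact hmin a haJ (hwle.trans (Finset.sup_mono hsub))
  · have hd0J : d0 ∈ J := hD hd0
    have hlex := hwa d0 hd0
    simp only [hf, Prod.Lex.lt_iff] at hlex
    rcases hlex with h | ⟨h, _⟩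
    · simp [haJ, hd0J] at h
    · simp [haJ, hd0J] at h

lemma exists_min_spanning (S : Finset {a : L // IsAtom a}) :
    ∃ J, J ⊆ S ∧ J.sup Subtype.val = S.sup Subtype.val ∧
      ∀ j ∈ J, ¬ (j : L) ≤ (J.erase j).sup Subtype.val := by
  classical
  induction S using Finset.strongInduction with
  | _ S IH =>
    by_cases h : ∃ j ∈ S, (j : L) ≤ (S.erase j).sup Subtype.val
    · obtain ⟨j, hjS, hj⟩ := h
      obtain ⟨J, h1, h2, h3⟩ := IH (S.erase j) (Finset.erase_ssubset hjS)
      refine ⟨J, h1.trans (S.erase_subset j), ?_, h3⟩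
      rw [h2]
      conv_rhs => rw [← Finset.insert_erase hjS]
      rw [Finset.sup_insert]
      exact (sup_eq_right.mpr hj).symm
    · push_neg at h
      exact ⟨S, Finset.Subset.refl _, rfl, h⟩

/-- Backward core: if every independent set is geometric then Star holds. -/
lemma star_of_indep (hr : IsRankFn r) (hatom : AtomisticL L)
    (H : ∀ I : Finset {a : L // IsAtom a}, IndepSet I → r (I.sup Subtype.val) = I.card) :
    Star r := by
  classical
  intro x a
  obtain ⟨S, hS⟩ := hatom x
  obtain ⟨J, hJS, hJsup, hJmin⟩ := exists_min_spanning S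
  have hrx : r x = J.card := by rw [hS, ← hJsup]; exact H J (indep_of_min hJmin)
  obtain ⟨K, hKT, hKsup, hKmin⟩ := exists_min_spanning (insert a J)
  have hrK : r (K.sup Subtype.val) = K.card := H K (indep_of_min hKmin)
  have hsup : K.sup Subtype.val = x ⊔ (a : L) := by
    rw [hKsup, Finset.sup_insert, hJsup, ← hS, sup_comm]
  have hcard : K.card ≤ J.card + 1 :=
    le_trans (Finset.card_le_card hKT) (Finset.card_insert_le a J)
  rw [← hsup, hrK, hrx]
  exact hcard

end GeomAux

/-- A finite, bounded, atomistic, graded lattice is geometric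
(its rank function is submodular) if and only if every independent set `I`
satisfies `rank(⋁ I) = |I|` (i.e. every independent set is geometric). -/
theorem geometric_iff_indep_geometric (r : L → ℕ) (hr : IsRankFn r)
    (hatom : AtomisticL L) :
    (∀ x y : L, r (x ⊓ y) + r (x ⊔ y) ≤ r x + r y) ↔
      (∀ I : Finset {a : L // IsAtom a}, IndepSet I → r (I.sup Subtype.val) = I.card) := by
  constructor
  · intro hsub I hI
    have hstar : GeomAux.Star r := by
      intro x a
      have h1 := hsub x (a : L)
      have h2 : r ((a : L)) = 1 := GeomAux.rank_atom hr a.2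
      omega
    exact GeomAux.rank_eq_card_of_indep hr hstar hI
  · intro H
    exact GeomAux.submodular_of_star hr hatom (GeomAux.star_of_indep hr hatom H)
end

section
/- If 𝓛 is a C_n lattice and 𝓟 is the induced geometric lattice on the ground set J (identifying elements of 𝓛 with their atom sets, i.e., as subsets of J), then 𝓛 consists exactly of the admissible flats of 𝓟 together with J: 𝓛 = (𝓟 ∩ P^ad(J)) ∪ {J}, where P^ad(J) is the set of admissible subsets of J. -/
open Finset

variable {α : Type*} [DecidableEq α] [Fintype α]

/-- The atoms of `L` meeting the set `X` (written `A(X)` in the paper). -/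
def atomsMeeting (L : Set (Finset α)) (X : Finset α) : Set (Finset α) :=
  {A | IsAtomIn L A ∧ (A ∩ X).Nonempty}

/-- `X` is disjoint in `L`: its elements lie in distinct atoms of `L`,
i.e. `|A(X)| = |X|`. -/
def DisjointIn (L : Set (Finset α)) (X : Finset α) : Prop :=
  (atomsMeeting L X).ncard = X.card

/-- The join of `S` in the family `L`: the smallest member of `L` containing `S`. -/
def joinIn (L : Set (Finset α)) (S : Finset α) : Set α :=
  {x | ∀ X ∈ L, S ⊆ X → x ∈ X}

/-- A nonempty, disjoint-in-`L` set `D ⊆ J` is bounded below w.r.t. the strict order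
`ω` on the ground set if some `a` is a strict `ω`-lower bound of `D` with `a ∈ ⋁D`. -/
def GBB (L : Set (Finset α)) (ω : α → α → Prop) (D : Finset α) : Prop :=
  D.Nonempty ∧ DisjointIn L D ∧ ∃ a : α, (∀ d ∈ D, ω a d) ∧ a ∈ joinIn L D

/-- `B` is NBB w.r.t. `ω` if it contains no bounded below subset. -/
def GNBB (L : Set (Finset α)) (ω : α → α → Prop) (B : Finset α) : Prop :=
  ∀ D ⊆ B, ¬ GBB L ω D

/-- A subset of the ground set is independent in `L` if it is NBB for some
linear (strict total) order on the ground set. -/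
def IndepIn (L : Set (Finset α)) (B : Finset α) : Prop :=
  ∃ ω : α → α → Prop, IsStrictTotalOrder α ω ∧ GNBB L ω B

/-- A set is admissible if it is disjoint from its star. -/
def Admissible (star : α → α) (A : Finset α) : Prop := A ∩ A.image star = ∅

/-- The rank function of the matroid with independent-set family `𝓘`. -/
noncomputable def matRank (𝓘 : Set (Finset α)) (A : Finset α) : ℕ :=
  sSup {k | ∃ I ∈ 𝓘, I ⊆ A ∧ I.card = k}

/-- `F` is a flat of the matroid on ground set `E` with independent sets `𝓘`. -/
def IsFlatOf (𝓘 : Set (Finset α)) (E : Finset α) (F : Finset α) : Prop :=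
  F ⊆ E ∧ ∀ x ∈ E, x ∉ F → matRank 𝓘 F < matRank 𝓘 (insert x F)


set_option linter.unusedSectionVars false

namespace CnAux

open Classical in
/-- The closure: smallest member of `L` containing `S`. -/
noncomputable def cl (E : Finset α) (L : Set (Finset α)) (S : Finset α) : Finset α :=
  E.filter fun x => ∀ X ∈ L, S ⊆ X → x ∈ X

variable {star : α → α} {E : Finset α} {L : Set (Finset α)}

lemma mem_cl {S x} : x ∈ cl E L S ↔ x ∈ E ∧ ∀ X ∈ L, S ⊆ X → x ∈ X := by
  simp [cl]

lemma exists_min_member (h : IsCnLattice star E L) {S : Finset α} (hS : S ⊆ E) :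
    ∃ M ∈ L, S ⊆ M ∧ ∀ X ∈ L, S ⊆ X → M ⊆ X := by
  suffices H : ∀ n (X : Finset α), X ∈ L → S ⊆ X → X.card = n →
      ∃ M ∈ L, S ⊆ M ∧ ∀ X ∈ L, S ⊆ X → M ⊆ X from
    H E.card E h.ground_mem hS rfl
  intro n
  induction n using Nat.strong_induction_on with
  | _ n ih =>
    intro X hX hSX hcard
    by_cases hmin : ∀ Y ∈ L, S ⊆ Y → X ⊆ Y
    · exact ⟨X, hX, hSX, hmin⟩
    · push_neg at hmin
      obtain ⟨Y, hY, hSY, hXY⟩ := hmin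
      have hmem : X ∩ Y ∈ L := h.inter_mem X hX Y hY
      have hlt : (X ∩ Y).card < n := by
        subst hcard
        apply Finset.card_lt_card
        constructor
        · exact Finset.inter_subset_left
        · intro hsub
          exact hXY (fun a ha => (Finset.mem_inter.1 (hsub ha)).2)
      exact ih _ hlt _ hmem (Finset.subset_inter hSX hSY) rfl

lemma cl_spec (h : IsCnLattice star E L) {S : Finset α} (hS : S ⊆ E) :
    cl E L S ∈ L ∧ S ⊆ cl E L S ∧ ∀ X ∈ L, S ⊆ X → cl E L S ⊆ X := by
  obtain ⟨M, hM, hSM, hmin⟩ := exists_min_member h hS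
  have hcl : cl E L S = M := by
    ext x
    rw [mem_cl]
    constructor
    · rintro ⟨-, hx⟩; exact hx M hM hSM
    · intro hx
      exact ⟨h.subset_ground M hM hx, fun X hX hSX => hmin X hX hSX hx⟩
  rw [hcl]; exact ⟨hM, hSM, hmin⟩

lemma cl_mem (h : IsCnLattice star E L) {S : Finset α} (hS : S ⊆ E) : cl E L S ∈ L :=
  (cl_spec h hS).1

lemma subset_cl (h : IsCnLattice star E L) {S : Finset α} (hS : S ⊆ E) : S ⊆ cl E L S :=
  (cl_spec h hS).2.1

lemma cl_subset (h : IsCnLattice star E L) {S : Finset α} (hS : S ⊆ E) {X : Finset α}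
    (hX : X ∈ L) (hSX : S ⊆ X) : cl E L S ⊆ X :=
  (cl_spec h hS).2.2 X hX hSX

lemma cl_subset_ground {S : Finset α} : cl E L S ⊆ E := fun _ hx => (mem_cl.1 hx).1

lemma cl_mono (h : IsCnLattice star E L) {S T : Finset α} (hST : S ⊆ T) (hT : T ⊆ E) :
    cl E L S ⊆ cl E L T :=
  cl_subset h (hST.trans hT) (cl_mem h hT) (hST.trans (subset_cl h hT))

lemma cl_of_mem (h : IsCnLattice star E L) {X : Finset α} (hX : X ∈ L) : cl E L X = X :=
  le_antisymm (cl_subset h (h.subset_ground X hX) hX subset_rfl)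
    (subset_cl h (h.subset_ground X hX))

lemma cl_empty (h : IsCnLattice star E L) : cl E L ∅ = ∅ := cl_of_mem h h.empty_mem

lemma cl_insert_cl (h : IsCnLattice star E L) {T : Finset α} (hT : T ⊆ E) {x : α} (hx : x ∈ E) :
    cl E L (insert x (cl E L T)) = cl E L (insert x T) := by
  have h1 : insert x T ⊆ E := Finset.insert_subset hx hT
  have h2 : insert x (cl E L T) ⊆ E := Finset.insert_subset hx cl_subset_ground
  apply le_antisymm
  · apply cl_subset h h2 (cl_mem h h1)
    apply Finset.insert_subset (subset_cl h h1 (Finset.mem_insert_self _ _))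
    exact cl_mono h (Finset.subset_insert _ _) h1
  · exact cl_mono h (Finset.insert_subset_insert _ (subset_cl h hT)) h2

lemma cl_insert_of_mem_cl (h : IsCnLattice star E L) {T : Finset α} (hT : T ⊆ E) {x : α}
    (hx : x ∈ cl E L T) : cl E L (insert x T) = cl E L T := by
  have hxE : x ∈ E := cl_subset_ground hx
  apply le_antisymm
  · exact cl_subset h (Finset.insert_subset hxE hT) (cl_mem h hT)
      (Finset.insert_subset hx (subset_cl h hT))
  · exact cl_mono h (Finset.subset_insert _ _) (Finset.insert_subset hxE hT)

/-- A member of `L` other than `E` cannot contain a pair `{s, star s}`. -/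
lemma not_pair_mem (h : IsCnLattice star E L) {X : Finset α} (hX : X ∈ L) (hXE : X ≠ E)
    {s : α} (hs : s ∈ X) (hss : star s ∈ X) : False := by
  have := h.admissible X hX hXE
  have : star s ∈ X ∩ X.image star := by
    rw [Finset.mem_inter]
    exact ⟨hss, Finset.mem_image.2 ⟨s, hs, rfl⟩⟩
  rw [h.admissible X hX hXE] at this
  exact absurd this (Finset.notMem_empty _)

lemma cl_eq_ground_of_pair (h : IsCnLattice star E L) {S : Finset α} (hS : S ⊆ E)
    {s : α} (hs : s ∈ S) (hss : star s ∈ S) : cl E L S = E := by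
  by_contra hne
  exact not_pair_mem h (cl_mem h hS) hne (subset_cl h hS hs) (subset_cl h hS hss)

end CnAux

set_option linter.unusedSectionVars false

namespace CnAux

variable {α : Type*} [DecidableEq α] [Fintype α]
variable {star : α → α} {E : Finset α} {L : Set (Finset α)}

/-- "Ordered independent list": each entry avoids the closure of the later entries. -/
def OIL (E : Finset α) (L : Set (Finset α)) : List α → Prop
  | [] => True
  | a :: t => a ∉ cl E L t.toFinset ∧ OIL E L t

lemma oil_nil : OIL E L [] := trivial

lemma oil_nodup (h : IsCnLattice star E L) :
    ∀ {l : List α}, OIL E L l → (∀ x ∈ l, x ∈ E) → l.Nodup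
  | [], _, _ => List.nodup_nil
  | a :: t, ⟨ha, ht⟩, hE => by
    refine List.nodup_cons.2 ⟨fun hat => ?_, oil_nodup h ht fun x hx => hE x (List.mem_cons_of_mem _ hx)⟩
    exact ha (subset_cl h (fun x hx => hE x (List.mem_cons_of_mem _ (List.mem_toFinset.1 hx)))
      (List.mem_toFinset.2 hat))

lemma oil_of_cons {a : α} {t : List α} (h : OIL E L (a :: t)) : OIL E L t := h.2

lemma toFinset_subset_of_sublist {l l' : List α} (h : l' ⊆ l) : l'.toFinset ⊆ l.toFinset :=
  fun x hx => List.mem_toFinset.2 (h (List.mem_toFinset.1 hx))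

lemma oil_erase (h : IsCnLattice star E L) :
    ∀ {l : List α}, OIL E L l → (∀ x ∈ l, x ∈ E) → ∀ a, OIL E L (l.erase a)
  | [], _, _, _ => trivial
  | b :: t, ⟨hb, ht⟩, hE, a => by
    by_cases hba : b = a
    · rw [hba, List.erase_cons_head]; exact ht
    · rw [List.erase_cons_tail (by simp [hba])]
      have htE : ∀ x ∈ t, x ∈ E := fun x hx => hE x (List.mem_cons_of_mem _ hx)
      refine ⟨fun hmem => hb ?_, oil_erase h ht htE a⟩
      refine cl_mono h (toFinset_subset_of_sublist List.erase_subset)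
        (fun x hx => htE x (List.mem_toFinset.1 hx)) hmem

lemma oil_drop (k : ℕ) : ∀ {l : List α}, OIL E L l → OIL E L (l.drop k) := by
  induction k with
  | zero => intro l hl; simpa using hl
  | succ n ih =>
    intro l hl
    match l with
    | [] => exact trivial
    | a :: t => rw [List.drop_succ_cons]; exact ih hl.2

lemma oil_getElem {l : List α} (hl : OIL E L l) {i : ℕ} (hi : i < l.length) :
    l[i] ∉ cl E L (l.drop (i + 1)).toFinset := by
  induction l generalizing i with
  | nil => simp at hi
  | cons a t ih =>
    cases i with
    | zero => simpa using hl.1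
    | succ n =>
      have hn : n < t.length := by simpa using hi
      simpa using ih hl.2 hn

/-- the step lemma : adding one point of `E` to a member gives a cover or `E`. -/
lemma step (h : IsCnLattice star E L) {A : Finset α} (hA : A ∈ L) (hAE : A ≠ E)
    {x : α} (hx : x ∈ E) (hxA : x ∉ A) :
    CovIn L A (cl E L (insert x A)) ∨ cl E L (insert x A) = E := by
  have hAg : A ⊆ E := h.subset_ground A hA
  have hins : insert x A ⊆ E := Finset.insert_subset hx hAg
  by_cases hstar : x ∈ A.image star
  · right
    obtain ⟨s, hs, hsx⟩ := Finset.mem_image.1 hstar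
    by_contra hne
    refine not_pair_mem h (cl_mem h hins) hne
      (subset_cl h hins (Finset.mem_insert_of_mem hs)) ?_
    rw [hsx]
    exact subset_cl h hins (Finset.mem_insert_self _ _)
  · by_cases hcov : CovIn L A E
    · rcases hcov.2.2.2 (cl E L (insert x A)) (cl_mem h hins)
        ((Finset.subset_insert _ _).trans (subset_cl h hins)) cl_subset_ground with hc | hc
      · exact absurd (hc ▸ subset_cl h hins (Finset.mem_insert_self _ _)) hxA
      · right; exact hc
    · obtain ⟨B, hB, hxB⟩ := (h.covers_union A hA hcov x).1 (Finset.mem_sdiff.2 ⟨hx, hstar⟩)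
      left
      have hsub : cl E L (insert x A) ⊆ B :=
        cl_subset h hins hB.2.1 (Finset.insert_subset hxB hB.2.2.1.1)
      rcases hB.2.2.2 (cl E L (insert x A)) (cl_mem h hins)
          ((Finset.subset_insert _ _).trans (subset_cl h hins)) hsub with hc | hc
      · exact absurd (hc ▸ subset_cl h hins (Finset.mem_insert_self _ _)) hxA
      · rw [hc]; exact hB

/-- refined form: if the step reaches `E`, then `x ∈ A*` or `A` is a coatom. -/
lemma step_refined (h : IsCnLattice star E L) {A : Finset α} (hA : A ∈ L) (hAE : A ≠ E)
    {x : α} (hx : x ∈ E) (hxA : x ∉ A) (hcl : cl E L (insert x A) = E) :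
    x ∈ A.image star ∨ CovIn L A E := by
  by_contra hcon
  push_neg at hcon
  obtain ⟨hstar, hcov⟩ := hcon
  obtain ⟨B, hB, hxB⟩ := (h.covers_union A hA hcov x).1 (Finset.mem_sdiff.2 ⟨hx, hstar⟩)
  have hBE : B ≠ E := fun hBE => hcov (hBE ▸ hB)
  have hsub : cl E L (insert x A) ⊆ B :=
    cl_subset h (Finset.insert_subset hx (h.subset_ground A hA)) hB.2.1
      (Finset.insert_subset hxB hB.2.2.1.1)
  rw [hcl] at hsub
  exact hBE (le_antisymm (h.subset_ground B hB.2.1) hsub)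

/-- every cover arises as a single step. -/
lemma cover_eq_step (h : IsCnLattice star E L) {A B : Finset α} (hAB : CovIn L A B)
    {x : α} (hxB : x ∈ B) (hxA : x ∉ A) : cl E L (insert x A) = B := by
  have hins : insert x A ⊆ E :=
    Finset.insert_subset (h.subset_ground B hAB.2.1 hxB) (h.subset_ground A hAB.1)
  have hsub : cl E L (insert x A) ⊆ B :=
    cl_subset h hins hAB.2.1 (Finset.insert_subset hxB hAB.2.2.1.1)
  rcases hAB.2.2.2 _ (cl_mem h hins) ((Finset.subset_insert _ _).trans (subset_cl h hins))
      hsub with hc | hc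
  · exact absurd (hc ▸ subset_cl h hins (Finset.mem_insert_self _ _)) hxA
  · exact hc

/-- Chains of covers from `W` to `v` (list of intermediate stops above `W`). -/
def ChainTo (L : Set (Finset α)) : Finset α → List (Finset α) → Finset α → Prop
  | W, [], v => v = W
  | W, z :: c, v => CovIn L W z ∧ ChainTo L z c v

lemma chainTo_subset : ∀ {W : Finset α} {c : List (Finset α)} {v : Finset α},
    ChainTo L W c v → W ⊆ v
  | _, [], _, h => by rw [h]
  | _, z :: c, _, ⟨hWz, hc⟩ => hWz.2.2.1.1.trans (chainTo_subset hc)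

lemma chainTo_mem : ∀ {W : Finset α} {c : List (Finset α)} {v : Finset α},
    W ∈ L → ChainTo L W c v → v ∈ L
  | _, [], _, hW, h => by rw [h]; exact hW
  | _, z :: c, _, _, ⟨hWz, hc⟩ => chainTo_mem hWz.2.1 hc

end CnAux

set_option linter.unusedSectionVars false
namespace CnAux

variable {α : Type*} [DecidableEq α] [Fintype α]
variable {star : α → α} {E : Finset α} {L : Set (Finset α)}

lemma exists_chainTo (h : IsCnLattice star E L) {W v : Finset α} (hW : W ∈ L) (hv : v ∈ L)
    (hWv : W ⊆ v) (hvE : v ≠ E) : ∃ c, ChainTo L W c v := by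
  suffices H : ∀ n (W : Finset α), W ∈ L → W ⊆ v → (v \ W).card = n → ∃ c, ChainTo L W c v from
    H _ W hW hWv rfl
  intro n
  induction n using Nat.strong_induction_on with
  | _ n ih =>
    intro W hW hWv hcard
    by_cases heq : W = v
    · exact ⟨[], heq.symm⟩
    · have hWE : W ≠ E := fun hWE => hvE (le_antisymm (h.subset_ground v hv) (hWE ▸ hWv))
      obtain ⟨x, hxv, hxW⟩ := Finset.exists_of_ssubset (lt_of_le_of_ne hWv heq)
      set z := cl E L (insert x W) with hz
      have hzv : z ⊆ v := cl_subset h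
        (Finset.insert_subset (h.subset_ground v hv hxv) (h.subset_ground W hW)) hv
        (Finset.insert_subset hxv hWv)
      have hzE : z ≠ E := fun hzE => hvE (le_antisymm (h.subset_ground v hv) (hzE ▸ hzv))
      have hcov : CovIn L W z := by
        rcases step h hW hWE (h.subset_ground v hv hxv) hxW with hc | hc
        · exact hc
        · exact absurd hc hzE
      have hxz : x ∈ z := subset_cl h
        (Finset.insert_subset (h.subset_ground v hv hxv) (h.subset_ground W hW))
        (Finset.mem_insert_self _ _)
      have hlt : (v \ z).card < n := by
        subst hcard
        apply Finset.card_lt_card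
        constructor
        · exact Finset.sdiff_subset_sdiff subset_rfl hcov.2.2.1.1
        · intro hsub
          have := hsub (Finset.mem_sdiff.2 ⟨hxv, hxW⟩)
          exact (Finset.mem_sdiff.1 this).2 hxz
      obtain ⟨c, hc⟩ := ih _ hlt z hcov.2.1 hzv rfl
      exact ⟨z :: c, hcov, hc⟩

/-- Semimodularity: the join of two distinct covers of `W` covers each, as long as
everything lives inside some member `v ≠ E`. -/
lemma sm (h : IsCnLattice star E L) {W z z' v : Finset α} (hz : CovIn L W z)
    (hz' : CovIn L W z') (hne : z ≠ z') (hzv : z ⊆ v) (hz'v : z' ⊆ v) (hv : v ∈ L)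
    (hvE : v ≠ E) : CovIn L z (cl E L (z ∪ z')) := by
  obtain ⟨x, hxz', hxW⟩ := Finset.exists_of_ssubset hz'.2.2.1
  have hxE : x ∈ E := h.subset_ground z' hz'.2.1 hxz'
  have hzE : z ⊆ E := h.subset_ground z hz.2.1
  have hz'E : z' ⊆ E := h.subset_ground z' hz'.2.1
  have hzuE : z ∪ z' ⊆ E := Finset.union_subset hzE hz'E
  have hcl : z' = cl E L (insert x W) := (cover_eq_step h hz' hxz' hxW).symm
  have hxnz : x ∉ z := by
    intro hxzmem
    have : z' ⊆ z := by
      rw [hcl]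
      exact cl_subset h (Finset.insert_subset hxE (h.subset_ground W hz.1)) hz.2.1
        (Finset.insert_subset hxzmem hz.2.2.1.1)
    rcases hz.2.2.2 z' hz'.2.1 hz'.2.2.1.1 this with hc | hc
    · exact (Finset.exists_of_ssubset hz'.2.2.1).elim fun y hy => hy.2 (hc ▸ hy.1)
    · exact hne hc.symm
  have hkey : cl E L (z ∪ z') = cl E L (insert x z) := by
    apply le_antisymm
    · apply cl_subset h hzuE (cl_mem h (Finset.insert_subset hxE hzE))
      apply Finset.union_subset
      · exact (Finset.subset_insert _ _).trans (subset_cl h (Finset.insert_subset hxE hzE))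
      · rw [hcl]
        exact cl_subset h (Finset.insert_subset hxE (h.subset_ground W hz.1))
          (cl_mem h (Finset.insert_subset hxE hzE))
          (Finset.insert_subset (subset_cl h (Finset.insert_subset hxE hzE)
            (Finset.mem_insert_self _ _))
            (hz.2.2.1.1.trans ((Finset.subset_insert _ _).trans
              (subset_cl h (Finset.insert_subset hxE hzE)))))
    · exact cl_mono h (by
        intro y hy
        rcases Finset.mem_insert.1 hy with rfl | hyz
        · exact Finset.mem_union_right _ hxz'
        · exact Finset.mem_union_left _ hyz) hzuE
  rw [hkey]
  have hsubv : cl E L (insert x z) ⊆ v :=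
    cl_subset h (Finset.insert_subset hxE hzE) hv (Finset.insert_subset (hz'v hxz') hzv)
  have hzEne : z ≠ E := fun hEz => hvE (le_antisymm (h.subset_ground v hv) (hEz ▸ hzv))
  rcases step h hz.2.1 hzEne hxE hxnz with hc | hc
  · exact hc
  · exact absurd (le_antisymm (h.subset_ground v hv) (hc ▸ hsubv)) hvE

/-- Jordan–Dedekind: all cover-chains between the same endpoints (below `E`) have
the same length. -/
lemma jd (h : IsCnLattice star E L) :
    ∀ (k : ℕ) {W v : Finset α} {c c' : List (Finset α)}, ChainTo L W c v →
      ChainTo L W c' v → W ∈ L → v ≠ E → c.length = k → c'.length = k := by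
  intro k
  induction k with
  | zero =>
    intro W v c c' hc hc' hW hvE hlen
    match c, hc, hlen with
    | [], hc, _ =>
      match c', hc' with
      | [], _ => rfl
      | z' :: rest', ⟨hWz', hrest'⟩ =>
        have hvW : v = W := hc
        exact absurd (le_antisymm hWz'.2.2.1.1 ((chainTo_subset hrest').trans (le_of_eq hvW)))
          (ne_of_lt hWz'.2.2.1)
  | succ k ih =>
    intro W v c c' hc hc' hW hvE hlen
    match c, hc, hlen with
    | z :: rest, ⟨hWz, hrest⟩, hlen =>
      have hrlen : rest.length = k := by simpa using hlen
      match c', hc' with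
      | [], hc' =>
        have hvW : v = W := hc'
        exact absurd (le_antisymm hWz.2.2.1.1 ((chainTo_subset hrest).trans (le_of_eq hvW)))
          (ne_of_lt hWz.2.2.1)
      | z' :: rest', ⟨hWz', hrest'⟩ =>
        by_cases hzz : z = z'
        · subst hzz
          simp only [List.length_cons, ih hrest hrest' hWz.2.1 hvE hrlen]
        · have hv : v ∈ L := chainTo_mem hWz.2.1 hrest
          have hzv : z ⊆ v := chainTo_subset hrest
          have hz'v : z' ⊆ v := chainTo_subset hrest'
          have hcov1 : CovIn L z (cl E L (z ∪ z')) := sm h hWz hWz' hzz hzv hz'v hv hvE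
          have hcov2 : CovIn L z' (cl E L (z' ∪ z)) := sm h hWz' hWz (Ne.symm hzz) hz'v hzv hv hvE
          have huc : cl E L (z' ∪ z) = cl E L (z ∪ z') := by rw [Finset.union_comm]
          rw [huc] at hcov2
          have hev : cl E L (z ∪ z') ⊆ v :=
            cl_subset h (Finset.union_subset (h.subset_ground z hWz.2.1)
              (h.subset_ground z' hWz'.2.1)) hv (Finset.union_subset hzv hz'v)
          obtain ⟨M, hM⟩ := exists_chainTo h hcov1.2.1 hv hev hvE
          have h1 : ChainTo L z (cl E L (z ∪ z') :: M) v := ⟨hcov1, hM⟩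
          have h2 : ChainTo L z' (cl E L (z ∪ z') :: M) v := ⟨hcov2, hM⟩
          have hM1 : (cl E L (z ∪ z') :: M).length = k := ih hrest h1 hWz.2.1 hvE hrlen
          have := ih h2 hrest' hWz'.2.1 hvE hM1
          simpa [this]

lemma chainTo_snoc : ∀ {W : Finset α} {c : List (Finset α)} {v z : Finset α},
    ChainTo L W c v → CovIn L v z → ChainTo L W (c ++ [z]) z
  | W, [], v, z, hc, hcov => by
    have hvW : v = W := hc
    subst hvW
    exact ⟨hcov, rfl⟩
  | _, b :: cb, _, _, hc, hcov => ⟨hc.1, chainTo_snoc hc.2 hcov⟩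

/-- An OIL list whose closure avoids `E` produces a chain from `∅` of the same length. -/
lemma oil_chain (h : IsCnLattice star E L) :
    ∀ {l : List α}, OIL E L l → (∀ x ∈ l, x ∈ E) → cl E L l.toFinset ≠ E →
      ∃ c, ChainTo L ∅ c (cl E L l.toFinset) ∧ c.length = l.length := by
  intro l
  induction l with
  | nil =>
    intro _ _ _
    exact ⟨[], by simp [ChainTo, cl_empty h], rfl⟩
  | cons a t ih =>
    intro hl hE hclE
    have htE : ∀ x ∈ t, x ∈ E := fun x hx => hE x (List.mem_cons_of_mem _ hx)
    have htEf : t.toFinset ⊆ E := fun x hx => htE x (List.mem_toFinset.1 hx)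
    have haE : a ∈ E := hE a (List.mem_cons_self)
    have hmono : cl E L t.toFinset ⊆ cl E L (a :: t).toFinset := by
      apply cl_mono h _ (fun x hx => hE x (List.mem_toFinset.1 hx))
      intro x hx
      simp only [List.toFinset_cons]
      exact Finset.mem_insert_of_mem hx
    have htne : cl E L t.toFinset ≠ E := by
      intro hTE
      apply hclE
      exact le_antisymm cl_subset_ground (le_of_eq_of_le hTE.symm hmono)
    obtain ⟨ct, hct, hlen⟩ := ih hl.2 htE htne
    have hX : cl E L (a :: t).toFinset = cl E L (insert a (cl E L t.toFinset)) := by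
      rw [cl_insert_cl h htEf haE]
      simp [List.toFinset_cons]
    have hcov : CovIn L (cl E L t.toFinset) (cl E L (a :: t).toFinset) := by
      rw [hX]
      rcases step h (cl_mem h htEf) htne haE hl.1 with hc | hc
      · exact hc
      · rw [hX] at hclE; exact absurd hc hclE
    exact ⟨ct ++ [cl E L (a :: t).toFinset], chainTo_snoc hct hcov, by simp [hlen]⟩
  
end CnAux

set_option linter.unusedSectionVars false
namespace CnAux

variable {α : Type*} [DecidableEq α] [Fintype α]
variable {star : α → α} {E : Finset α} {L : Set (Finset α)}

/-- Two OIL lists with the same closure (below `E`) have the same length. -/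
lemma oil_length_eq (h : IsCnLattice star E L) {l l' : List α} (hl : OIL E L l)
    (hl' : OIL E L l') (hlE : ∀ x ∈ l, x ∈ E) (hl'E : ∀ x ∈ l', x ∈ E)
    (hcl : cl E L l.toFinset = cl E L l'.toFinset) (hne : cl E L l.toFinset ≠ E) :
    l.length = l'.length := by
  obtain ⟨c, hc, hlen⟩ := oil_chain h hl hlE hne
  obtain ⟨c', hc', hlen'⟩ := oil_chain h hl' hl'E (hcl ▸ hne)
  rw [← hcl] at hc'
  rw [← hlen, ← hlen']
  exact (jd h c.length hc hc' h.empty_mem hne rfl).symm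

lemma joinIn_eq_cl (h : IsCnLattice star E L) {D : Finset α} (hD : D ⊆ E) :
    joinIn L D = ↑(cl E L D) := by
  ext x
  simp only [joinIn, Set.mem_setOf_eq, Finset.coe_insert, Finset.mem_coe]
  constructor
  · intro hx
    exact hx _ (cl_mem h hD) (subset_cl h hD)
  · intro hx X hX hDX
    exact cl_subset h hD hX hDX hx

/-- From an OIL list to independence: builds an explicit strict total order. -/
lemma oil_indepIn (h : IsCnLattice star E L) {l : List α} (hl : OIL E L l)
    (hlE : ∀ x ∈ l, x ∈ E) : IndepIn L l.toFinset := by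
  classical
  have hnd : l.Nodup := oil_nodup h hl hlE
  set f : α → ℕ := fun x => if x ∈ l then l.idxOf x else l.length with hf
  set ω : α → α → Prop := fun a b => f a < f b ∨ (f a = f b ∧ WellOrderingRel a b) with hω
  have hwo : IsStrictTotalOrder α (@WellOrderingRel α) := inferInstance
  have hirr : ∀ a : α, ¬ ω a a := by
    intro a ha
    rcases ha with hlt | ⟨-, hr⟩
    · exact lt_irrefl _ hlt
    · exact hwo.irrefl a hr
  have htri : ∀ a b : α, ω a b ∨ a = b ∨ ω b a := by
    intro a b
    rcases lt_trichotomy (f a) (f b) with hlt | heq | hgt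
    · exact Or.inl (Or.inl hlt)
    · rcases trichotomous_of (@WellOrderingRel α) a b with hr | hab | hr
      · exact Or.inl (Or.inr ⟨heq, hr⟩)
      · exact Or.inr (Or.inl hab)
      · exact Or.inr (Or.inr (Or.inr ⟨heq.symm, hr⟩))
    · exact Or.inr (Or.inr (Or.inl hgt))
  have htrans : ∀ a b c : α, ω a b → ω b c → ω a c := by
    rintro a b c (hab | ⟨hab, hr1⟩) (hbc | ⟨hbc, hr2⟩)
    · exact Or.inl (hab.trans hbc)
    · exact Or.inl (hbc ▸ hab)
    · exact Or.inl (hab ▸ hbc)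
    · exact Or.inr ⟨hab.trans hbc, hwo.trans _ _ _ hr1 hr2⟩
  haveI i1 : IsTrichotomous α ω := ⟨fun a b h1 h2 => by rcases htri a b with h | h | h <;> tauto⟩
  haveI i2 : IsTrans α ω := ⟨htrans⟩
  haveI i3 : IsIrrefl α ω := ⟨hirr⟩
  haveI i4 : IsStrictOrder α ω := ⟨⟩
  refine ⟨ω, ⟨⟩, ?_⟩
  · -- GNBB
    intro D hD hGBB
    obtain ⟨hne, hdis, a, hlow, hjoin⟩ := hGBB
    have hDE : D ⊆ E := hD.trans (fun x hx => hlE x (List.mem_toFinset.1 hx))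
    rw [joinIn_eq_cl h hDE] at hjoin
    have hjoin' : a ∈ cl E L D := hjoin
    by_cases hal : a ∈ l
    · -- a has an index i; all of D lies strictly later in l
      set i := l.idxOf a with hi
      have hilen : i < l.length := List.idxOf_lt_length_iff.2 hal
      have hDlater : ∀ d ∈ D, i < l.idxOf d := by
        intro d hd
        have hdl : d ∈ l := List.mem_toFinset.1 (hD hd)
        have hωad := hlow d hd
        rcases hωad with hlt | ⟨heq, -⟩
        · simpa [hf, hal, hdl] using hlt
        · exfalso
          have : a = d := by
            simp only [hf, if_pos hal, if_pos hdl] at heq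
            exact List.idxOf_inj hal |>.1 heq
          subst this
          exact hirr a (hlow a hd)
      have hDdrop : D ⊆ (l.drop (i + 1)).toFinset := by
        intro d hd
        have hdl : d ∈ l := List.mem_toFinset.1 (hD hd)
        have hj : l.idxOf d < l.length := List.idxOf_lt_length_iff.2 hdl
        have hij : i + 1 ≤ l.idxOf d := hDlater d hd
        rw [List.mem_toFinset]
        have hidx : (l.drop (i+1)).length = l.length - (i+1) := List.length_drop
        have hlt : l.idxOf d - (i+1) < (l.drop (i+1)).length := by omega
        have : (l.drop (i+1))[l.idxOf d - (i+1)] = l[l.idxOf d] := by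
          rw [List.getElem_drop]
          congr 1
          omega
        rw [List.getElem_idxOf hj] at this
        exact this ▸ List.getElem_mem hlt
      have hmem : a ∈ cl E L (l.drop (i + 1)).toFinset := by
        refine cl_mono h hDdrop ?_ hjoin'
        intro x hx
        exact hlE x (List.mem_of_mem_drop (List.mem_toFinset.1 hx))
      have := oil_getElem hl hilen
      rw [List.getElem_idxOf hilen] at this
      exact this hmem
    · -- a ∉ l : a is above everything in D
      obtain ⟨d, hd⟩ := hne
      have hdl : d ∈ l := List.mem_toFinset.1 (hD hd)
      have := hlow d hd
      rcases this with hlt | ⟨heq, -⟩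
      · simp only [hf, if_neg hal, if_pos hdl] at hlt
        exact absurd hlt (not_lt.2 (le_of_lt (List.idxOf_lt_length_iff.2 hdl)))
      · simp only [hf, if_neg hal, if_pos hdl] at heq
        exact absurd heq.symm (ne_of_lt (List.idxOf_lt_length_iff.2 hdl))

end CnAux

set_option linter.unusedSectionVars false
namespace CnAux

variable {α : Type*} [DecidableEq α] [Fintype α]
variable {star : α → α} {E : Finset α} {L : Set (Finset α)}

/-- In the nondegenerate case, the closure of a point of `E` is an atom. -/
lemma cl_singleton_atom (h : IsCnLattice star E L) (hnd : ¬ CovIn L ∅ E) {x : α}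
    (hx : x ∈ E) : IsAtomIn L (cl E L {x}) := by
  have hxE : ({x} : Finset α) ⊆ E := Finset.singleton_subset_iff.2 hx
  obtain ⟨B, hB, hxB⟩ := (h.covers_union ∅ h.empty_mem hnd x).1 (by simp [hx])
  have hsub : cl E L {x} ⊆ B := cl_subset h hxE hB.2.1 (Finset.singleton_subset_iff.2 hxB)
  rcases hB.2.2.2 _ (cl_mem h hxE) (Finset.empty_subset _) hsub with hc | hc
  · exact absurd (hc ▸ subset_cl h hxE (Finset.mem_singleton_self x)) (Finset.notMem_empty x)
  · rw [hc]; exact hB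

lemma atom_eq_cl_singleton (h : IsCnLattice star E L) {A : Finset α} (hA : IsAtomIn L A)
    {y : α} (hy : y ∈ A) : A = cl E L {y} := by
  have hyE : ({y} : Finset α) ⊆ E := Finset.singleton_subset_iff.2 (h.subset_ground A hA.2.1 hy)
  have hsub : cl E L {y} ⊆ A := cl_subset h hyE hA.2.1 (Finset.singleton_subset_iff.2 hy)
  rcases hA.2.2.2 _ (cl_mem h hyE) (Finset.empty_subset _) hsub with hc | hc
  · exact absurd (hc ▸ subset_cl h hyE (Finset.mem_singleton_self y)) (Finset.notMem_empty y)
  · exact hc.symm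

lemma atomsMeeting_eq (h : IsCnLattice star E L) (hnd : ¬ CovIn L ∅ E) {D : Finset α}
    (hD : D ⊆ E) : atomsMeeting L D = ↑(D.image fun d => cl E L {d}) := by
  ext A
  simp only [atomsMeeting, Set.mem_setOf_eq, Finset.coe_image, Set.mem_image, Finset.mem_coe]
  constructor
  · rintro ⟨hatom, y, hy⟩
    rw [Finset.mem_inter] at hy
    exact ⟨y, hy.2, (atom_eq_cl_singleton h hatom hy.1).symm⟩
  · rintro ⟨d, hd, rfl⟩
    refine ⟨cl_singleton_atom h hnd (hD hd), d, ?_⟩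
    rw [Finset.mem_inter]
    exact ⟨subset_cl h (Finset.singleton_subset_iff.2 (hD hd)) (Finset.mem_singleton_self d), hd⟩

/-- existence of an `ω`-minimum in a nonempty finset, for a strict total order. -/
lemma exists_omega_min {ω : α → α → Prop} (hST : IsStrictTotalOrder α ω) (s : Finset α)
    (hs : s.Nonempty) : ∃ b ∈ s, ∀ d ∈ s, d ≠ b → ω b d := by
  classical
  induction s using Finset.induction_on with
  | empty => exact absurd hs (by simp)
  | @insert a s ha ih =>
    rcases s.eq_empty_or_nonempty with rfl | hsne
    · exact ⟨a, by simp, by simp⟩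
    · obtain ⟨b, hb, hmin⟩ := ih hsne
      have hab : a ≠ b := fun hab => ha (hab ▸ hb)
      rcases (haveI := hST; trichotomous_of ω a b) with hω | heq | hω
      · refine ⟨a, Finset.mem_insert_self _ _, ?_⟩
        intro d hd hda
        rcases Finset.mem_insert.1 hd with rfl | hds
        · exact absurd rfl hda
        · by_cases hdb : d = b
          · exact hdb ▸ hω
          · exact hST.trans _ _ _ hω (hmin d hds hdb)
      · exact absurd heq hab
      · refine ⟨b, Finset.mem_insert_of_mem hb, ?_⟩
        intro d hd hdb
        rcases Finset.mem_insert.1 hd with rfl | hds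
        · exact hω
        · exact hmin d hds hdb

/-- From independence to an OIL list (nondegenerate case). -/
lemma indepIn_oil (h : IsCnLattice star E L) (hnd : ¬ CovIn L ∅ E) {B : Finset α}
    (hB : B ⊆ E) (hI : IndepIn L B) : ∃ l, OIL E L l ∧ l.toFinset = B := by
  classical
  obtain ⟨ω, hST, hGNBB⟩ := hI
  -- injectivity of atoms on B
  have hinj : ∀ d ∈ B, ∀ d' ∈ B, ω d d' → cl E L {d} = cl E L {d'} → False := by
    intro d hd d' hd' hω hcl
    apply hGNBB {d'} (Finset.singleton_subset_iff.2 hd')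
    refine ⟨⟨d', Finset.mem_singleton_self d'⟩, ?_, d, ?_, ?_⟩
    · -- DisjointIn
      unfold DisjointIn
      rw [atomsMeeting_eq h hnd (Finset.singleton_subset_iff.2 (hB hd')), Set.ncard_coe_finset]
      simp
    · intro e he
      rw [Finset.mem_singleton] at he
      exact he ▸ hω
    · rw [joinIn_eq_cl h (Finset.singleton_subset_iff.2 (hB hd')), ← hcl]
      exact_mod_cast subset_cl h (Finset.singleton_subset_iff.2 (hB hd))
        (Finset.mem_singleton_self d)
  -- main construction by strong induction on card
  suffices H : ∀ n (B' : Finset α), B' ⊆ B → B'.card = n → ∃ l, OIL E L l ∧ l.toFinset = B' from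
    H B.card B subset_rfl rfl
  intro n
  induction n using Nat.strong_induction_on with
  | _ n ih =>
    intro B' hB'B hcard
    rcases B'.eq_empty_or_nonempty with rfl | hne
    · exact ⟨[], trivial, rfl⟩
    · obtain ⟨b, hb, hmin⟩ := exists_omega_min hST B' hne
      have hrestlt : (B'.erase b).card < n := by
        rw [Finset.card_erase_of_mem hb]
        have h1 : 0 < B'.card := Finset.card_pos.2 hne
        omega
      obtain ⟨l', hl', hl'fin⟩ := ih _ hrestlt (B'.erase b) ((Finset.erase_subset _ _).trans hB'B) rfl
      have hbE : b ∈ E := hB (hB'B hb)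
      have hrE : B'.erase b ⊆ E := ((Finset.erase_subset _ _).trans hB'B).trans hB
      have hbcl : b ∉ cl E L (B'.erase b) := by
        intro hmem
        rcases (B'.erase b).eq_empty_or_nonempty with hemp | hrne
        · rw [hemp, cl_empty h] at hmem
          exact Finset.notMem_empty b hmem
        · apply hGNBB (B'.erase b) ((Finset.erase_subset _ _).trans hB'B)
          refine ⟨hrne, ?_, b, ?_, ?_⟩
          · unfold DisjointIn
            rw [atomsMeeting_eq h hnd hrE, Set.ncard_coe_finset]
            apply Finset.card_image_of_injOn
            intro d hd d' hd' hdd'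
            by_contra hne'
            have hd1 : d ∈ B := hB'B (Finset.mem_of_mem_erase hd)
            have hd2 : d' ∈ B := hB'B (Finset.mem_of_mem_erase hd')
            rcases (haveI := hST; trichotomous_of ω d d') with hω | heq | hω
            · exact hinj d hd1 d' hd2 hω hdd'
            · exact hne' heq
            · exact hinj d' hd2 d hd1 hω hdd'.symm
          · intro d hd
            exact hmin d (Finset.mem_of_mem_erase hd) (Finset.ne_of_mem_erase hd)
          · rw [joinIn_eq_cl h hrE]
            exact_mod_cast hmem
      refine ⟨b :: l', ⟨?_, hl'⟩, ?_⟩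
      · rw [hl'fin]; exact hbcl
      · rw [List.toFinset_cons, hl'fin, Finset.insert_erase hb]

end CnAux

set_option linter.unusedSectionVars false
namespace CnAux

variable {α : Type*} [DecidableEq α] [Fintype α]
variable {star : α → α} {E : Finset α} {L : Set (Finset α)}

lemma toFinset_erase' {l : List α} (hl : l.Nodup) (a : α) :
    (l.erase a).toFinset = l.toFinset.erase a := by
  induction l with
  | nil => simp
  | cons b t ih =>
    have hbt : b ∉ t := (List.nodup_cons.1 hl).1
    have hnd : t.Nodup := (List.nodup_cons.1 hl).2
    by_cases hba : b = a
    · subst hba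
      rw [List.erase_cons_head, List.toFinset_cons,
        Finset.erase_insert (by simp [hbt])]
    · rw [List.erase_cons_tail (by simp [hba]), List.toFinset_cons, List.toFinset_cons,
        ih hnd, Finset.erase_insert_of_ne hba]

lemma indepIn_empty : IndepIn L (∅ : Finset α) := by
  refine ⟨WellOrderingRel, inferInstance, ?_⟩
  intro D hD hGBB
  rw [Finset.subset_empty] at hD
  subst hD
  exact absurd hGBB.1 (by simp)

lemma bddAbove_rankSet (L : Set (Finset α)) (F : Finset α) :
    BddAbove {k | ∃ I ∈ {S | IndepIn L S}, I ⊆ F ∧ I.card = k} := by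
  refine ⟨F.card, ?_⟩
  rintro k ⟨I, -, hsub, rfl⟩
  exact Finset.card_le_card hsub

lemma matRank_exists (L : Set (Finset α)) (F : Finset α) :
    ∃ I, IndepIn L I ∧ I ⊆ F ∧ I.card = matRank {S | IndepIn L S} F := by
  have h0 : 0 ∈ {k | ∃ I ∈ {S | IndepIn L S}, I ⊆ F ∧ I.card = k} :=
    ⟨∅, indepIn_empty, Finset.empty_subset _, Finset.card_empty⟩
  obtain ⟨I, hI, hsub, hc⟩ := Nat.sSup_mem ⟨0, h0⟩ (bddAbove_rankSet L F)
  exact ⟨I, hI, hsub, hc⟩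

lemma card_le_matRank {L : Set (Finset α)} {F I : Finset α} (hI : IndepIn L I) (hsub : I ⊆ F) :
    I.card ≤ matRank {S | IndepIn L S} F :=
  le_csSup (bddAbove_rankSet L F) ⟨I, hI, hsub, rfl⟩

/-- get a maximal OIL list inside `F` (nondegenerate case). -/
lemma exists_max_oil (h : IsCnLattice star E L) (hnd : ¬ CovIn L ∅ E) {F : Finset α}
    (hF : F ⊆ E) : ∃ l, OIL E L l ∧ (∀ x ∈ l, x ∈ E) ∧ l.toFinset ⊆ F ∧
      l.length = matRank {S | IndepIn L S} F := by
  obtain ⟨I, hI, hsub, hc⟩ := matRank_exists L F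
  obtain ⟨l, hl, hlfin⟩ := indepIn_oil h hnd (hsub.trans hF) hI
  have hE : ∀ x ∈ l, x ∈ E := fun x hx => hF (hsub (hlfin ▸ List.mem_toFinset.2 hx))
  refine ⟨l, hl, hE, hlfin ▸ hsub, ?_⟩
  rw [← List.toFinset_card_of_nodup (oil_nodup h hl hE), hlfin, hc]

/-- maximal OIL lists in `F` span `F`. -/
lemma max_oil_spans (h : IsCnLattice star E L) {F : Finset α} (hF : F ⊆ E) {l : List α}
    (hl : OIL E L l) (hE : ∀ x ∈ l, x ∈ E) (hsub : l.toFinset ⊆ F)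
    (hlen : l.length = matRank {S | IndepIn L S} F) : F ⊆ cl E L l.toFinset := by
  intro f hf
  by_contra hfcl
  have hfE : f ∈ E := hF hf
  have hoil : OIL E L (f :: l) := ⟨hfcl, hl⟩
  have hEf : ∀ x ∈ f :: l, x ∈ E := by
    intro x hx
    rcases List.mem_cons.1 hx with rfl | hx
    · exact hfE
    · exact hE x hx
  have hind : IndepIn L (f :: l).toFinset := oil_indepIn h hoil hEf
  have hcard : (f :: l).toFinset.card = l.length + 1 := by
    rw [List.toFinset_card_of_nodup (oil_nodup h hoil hEf)]
    simp
  have hsub2 : (f :: l).toFinset ⊆ F := by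
    rw [List.toFinset_cons]
    exact Finset.insert_subset hf hsub
  have := card_le_matRank hind hsub2
  rw [hcard, hlen] at this
  omega

/-- trim an OIL list to a given smaller length. -/
lemma oil_trim {l : List α} (hl : OIL E L l) (hE : ∀ x ∈ l, x ∈ E) {n : ℕ}
    (hn : n ≤ l.length) : ∃ l', OIL E L l' ∧ (∀ x ∈ l', x ∈ E) ∧
      l'.toFinset ⊆ l.toFinset ∧ l'.length = n := by
  refine ⟨l.drop (l.length - n), oil_drop _ hl, ?_, ?_, ?_⟩
  · exact fun x hx => hE x (List.mem_of_mem_drop hx)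
  · exact toFinset_subset_of_sublist (List.drop_subset _ _)
  · rw [List.length_drop]; omega

end CnAux

set_option linter.unusedSectionVars false
namespace CnAux

variable {α : Type*} [DecidableEq α] [Fintype α]
variable {star : α → α} {E : Finset α} {L : Set (Finset α)}

lemma mem_isFlat (h : IsCnLattice star E L) (hnd : ¬ CovIn L ∅ E) {A : Finset α}
    (hA : A ∈ L) : IsFlatOf {S | IndepIn L S} E A := by
  refine ⟨h.subset_ground A hA, ?_⟩
  intro x hxE hxA
  obtain ⟨l, hl, hlE, hlsub, hllen⟩ := exists_max_oil h hnd (h.subset_ground A hA)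
  have hclA : cl E L l.toFinset ⊆ A :=
    cl_subset h (fun y hy => hlE y (List.mem_toFinset.1 hy)) hA hlsub
  have hxcl : x ∉ cl E L l.toFinset := fun hx => hxA (hclA hx)
  have hoil : OIL E L (x :: l) := ⟨hxcl, hl⟩
  have hEx : ∀ y ∈ x :: l, y ∈ E := by
    intro y hy
    rcases List.mem_cons.1 hy with rfl | hy
    · exact hxE
    · exact hlE y hy
  have hind : IndepIn L (x :: l).toFinset := oil_indepIn h hoil hEx
  have hsub : (x :: l).toFinset ⊆ insert x A := by
    rw [List.toFinset_cons]
    exact Finset.insert_subset_insert _ hlsub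
  have hcard : (x :: l).toFinset.card = l.length + 1 := by
    rw [List.toFinset_card_of_nodup (oil_nodup h hoil hEx)]; simp
  have hle := card_le_matRank hind hsub
  rw [hcard, hllen] at hle
  omega

/-- Key lemma "V5": an OIL list cannot contain both `s` and `star s` while the rest
(without `star s`) spans `E`. -/
lemma V5 (h : IsCnLattice star E L) {j : List α} (hj : OIL E L j) (hjE : ∀ y ∈ j, y ∈ E)
    {s : α} (hsj : s ∈ j.toFinset) (hxj : star s ∈ j.toFinset)
    (hclK : cl E L (j.toFinset.erase (star s)) = E) : False := by
  classical
  set x := star s with hxdef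
  have hjnd : j.Nodup := oil_nodup h hj hjE
  match j, hj, hjE, hsj, hxj, hclK, hjnd with
  | [], _, _, hsj, _, _, _ => simp at hsj
  | a :: t, hj, hjE, hsj, hxj, hclK, hjnd =>
    have haE : a ∈ E := hjE a (List.mem_cons_self)
    have htE : ∀ y ∈ t, y ∈ E := fun y hy => hjE y (List.mem_cons_of_mem _ hy)
    have htfinE : t.toFinset ⊆ E := fun y hy => htE y (List.mem_toFinset.1 hy)
    have hat : a ∉ t := (List.nodup_cons.1 hjnd).1
    have htnd : t.Nodup := (List.nodup_cons.1 hjnd).2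
    have htne : cl E L t.toFinset ≠ E := by
      intro hEq; apply hj.1; rw [hEq]; exact haE
    have hJins : (a :: t).toFinset = insert a t.toFinset := by rw [List.toFinset_cons]
    have hsx : s ≠ x := fun hsx => h.star_ne s (hxdef ▸ hsx.symm)
    have has : a = s ∨ a = x := by
      by_contra hcon
      push_neg at hcon
      have h1 : s ∈ t.toFinset := by
        rcases Finset.mem_insert.1 (hJins ▸ hsj) with hsa | hst
        · exact absurd hsa.symm hcon.1
        · exact hst
      have h2 : x ∈ t.toFinset := by
        rcases Finset.mem_insert.1 (hJins ▸ hxj) with hxa | hxt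
        · exact absurd hxa.symm hcon.2
        · exact hxt
      exact htne (cl_eq_ground_of_pair h htfinE h1 h2)
    have herase : (a :: t).toFinset.erase a = t.toFinset := by
      rw [hJins, Finset.erase_insert (by simp [hat])]
    rcases has with rfl | rfl
    · -- head is s
      have hxt : x ∈ t.toFinset := by
        rcases Finset.mem_insert.1 (hJins ▸ hxj) with hxa | hxt
        · exact absurd hxa.symm hsx
        · exact hxt
      have hxE : x ∈ E := htfinE hxt
      set u := t.erase x with hu
      have huoil : OIL E L u := oil_erase h hj.2 htE x
      have huE : ∀ y ∈ u, y ∈ E := fun y hy => htE y (List.mem_of_mem_erase hy)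
      have hufin : u.toFinset = t.toFinset.erase x := toFinset_erase' htnd x
      have hufinE : u.toFinset ⊆ E := fun y hy => huE y (List.mem_toFinset.1 hy)
      set W := cl E L u.toFinset with hW
      set A := cl E L t.toFinset with hA
      have hsA : a ∉ A := hj.1
      have hWA : W ⊆ A := by
        rw [hW, hA, hufin]
        exact cl_mono h (Finset.erase_subset _ _) htfinE
      have hWE : W ≠ E := fun hWEq =>
        htne (le_antisymm cl_subset_ground (le_of_eq_of_le hWEq.symm hWA))
      have hAWne : A ≠ W := by
        intro hEq
        have hlen := oil_length_eq h hj.2 huoil htE huE (by rw [← hA, ← hW, hEq]) (hA ▸ htne)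
        have hul : u.length = t.length - 1 := by
          rw [hu, List.length_erase_of_mem (List.mem_toFinset.1 hxt)]
        have htl : 1 ≤ t.length := List.length_pos_iff.2 (List.ne_nil_of_mem (List.mem_toFinset.1 hxt))
        omega
      have hKeq : (a :: t).toFinset.erase x = insert a u.toFinset := by
        rw [hJins, Finset.erase_insert_of_ne hsx, hufin]
      have hclW : cl E L (insert a W) = E := by
        rw [hW, cl_insert_cl h hufinE haE, ← hKeq, hclK]
      rcases step_refined h (cl_mem h hufinE) hWE haE
          (fun haW => hsA (hWA haW)) hclW with hstar | hcov
      · obtain ⟨w, hwW, hws⟩ := Finset.mem_image.1 hstar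
        have hwx : w = x := by
          have h1 : star (star w) = star a := by rw [hws]
          rw [h.star_invol] at h1
          rw [h1]
        rw [hwx] at hwW
        apply hAWne
        have ht2 : t.toFinset = insert x u.toFinset := by
          rw [hufin, Finset.insert_erase hxt]
        calc A = cl E L (insert x u.toFinset) := by rw [hA, ht2]
          _ = cl E L (insert x W) := (cl_insert_cl h hufinE hxE).symm
          _ = cl E L W := cl_insert_of_mem_cl h cl_subset_ground
                (subset_cl h cl_subset_ground hwW)
          _ = W := cl_of_mem h (cl_mem h hufinE)
      · rcases hcov.2.2.2 A (cl_mem h htfinE) hWA cl_subset_ground with hc | hc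
        · exact hAWne hc
        · exact htne hc
    · -- head is x = star s : tail spans E, contradiction
      apply hj.1
      rw [herase] at hclK
      rw [hclK]
      exact haE

/-- Key lemma "V1": swap `star s` for `s` in an independent list whose rest spans `E`. -/
lemma V1 (h : IsCnLattice star E L) {j : List α} (hj : OIL E L j) (hjE : ∀ y ∈ j, y ∈ E)
    {s : α} (hsE : s ∈ E) (hxj : star s ∈ j.toFinset) (hsj : s ∉ j.toFinset)
    (hclK : cl E L (j.toFinset.erase (star s)) = E) :
    ∃ l, OIL E L l ∧ (∀ y ∈ l, y ∈ E) ∧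
      l.toFinset = insert s (j.toFinset.erase (star s)) := by
  classical
  set x := star s with hxdef
  have hjnd : j.Nodup := oil_nodup h hj hjE
  match j, hj, hjE, hxj, hsj, hclK, hjnd with
  | [], _, _, hxj, _, _, _ => simp at hxj
  | a :: t, hj, hjE, hxj, hsj, hclK, hjnd =>
    have haE : a ∈ E := hjE a (List.mem_cons_self)
    have htE : ∀ y ∈ t, y ∈ E := fun y hy => hjE y (List.mem_cons_of_mem _ hy)
    have htfinE : t.toFinset ⊆ E := fun y hy => htE y (List.mem_toFinset.1 hy)
    have hat : a ∉ t := (List.nodup_cons.1 hjnd).1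
    have htnd : t.Nodup := (List.nodup_cons.1 hjnd).2
    have htne : cl E L t.toFinset ≠ E := by
      intro hEq; apply hj.1; rw [hEq]; exact haE
    have hJins : (a :: t).toFinset = insert a t.toFinset := by rw [List.toFinset_cons]
    have hax : a ≠ x := by
      intro haxeq
      apply hj.1
      have herase : (a :: t).toFinset.erase a = t.toFinset := by
        rw [hJins, Finset.erase_insert (by simp [hat])]
      rw [← haxeq, herase] at hclK
      rw [hclK]; exact haE
    have hxt : x ∈ t.toFinset := by
      rcases Finset.mem_insert.1 (hJins ▸ hxj) with hxa | hxt
      · exact absurd hxa.symm hax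
      · exact hxt
    have hxE : x ∈ E := htfinE hxt
    set u := t.erase x with hu
    have huoil : OIL E L u := oil_erase h hj.2 htE x
    have huE : ∀ y ∈ u, y ∈ E := fun y hy => htE y (List.mem_of_mem_erase hy)
    have hufin : u.toFinset = t.toFinset.erase x := toFinset_erase' htnd x
    have hufinE : u.toFinset ⊆ E := fun y hy => huE y (List.mem_toFinset.1 hy)
    set W := cl E L u.toFinset with hW
    set A := cl E L t.toFinset with hA
    have haA : a ∉ A := hj.1
    have hWA : W ⊆ A := by
      rw [hW, hA, hufin]
      exact cl_mono h (Finset.erase_subset _ _) htfinE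
    have hWE : W ≠ E := fun hWEq =>
      htne (le_antisymm cl_subset_ground (le_of_eq_of_le hWEq.symm hWA))
    have haW : a ∉ W := fun haW => haA (hWA haW)
    have hAWne : A ≠ W := by
      intro hEq
      have hlen := oil_length_eq h hj.2 huoil htE huE (by rw [← hA, ← hW, hEq]) (hA ▸ htne)
      have hul : u.length = t.length - 1 := by
        rw [hu, List.length_erase_of_mem (List.mem_toFinset.1 hxt)]
      have htl : 1 ≤ t.length := List.length_pos_iff.2 (List.ne_nil_of_mem (List.mem_toFinset.1 hxt))
      omega
    have hxW : x ∉ W := by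
      intro hxW
      apply hAWne
      have ht2 : t.toFinset = insert x u.toFinset := by
        rw [hufin, Finset.insert_erase hxt]
      calc A = cl E L (insert x u.toFinset) := by rw [hA, ht2]
        _ = cl E L (insert x W) := (cl_insert_cl h hufinE hxE).symm
        _ = cl E L W := cl_insert_of_mem_cl h cl_subset_ground
              (subset_cl h cl_subset_ground hxW)
        _ = W := cl_of_mem h (cl_mem h hufinE)
    have hKeq : (a :: t).toFinset.erase x = insert a u.toFinset := by
      rw [hJins, Finset.erase_insert_of_ne hax, hufin]
    have hclaW : cl E L (insert a W) = E := by
      rw [hW, cl_insert_cl h hufinE haE, ← hKeq, hclK]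
    have hnotco : ¬ CovIn L W E := by
      intro hcov
      rcases hcov.2.2.2 A (cl_mem h htfinE) hWA cl_subset_ground with hc | hc
      · exact hAWne hc
      · exact htne hc
    have hstarA : star a ∈ W := by
      rcases step_refined h (cl_mem h hufinE) hWE haE haW hclaW with hstar | hcov
      · obtain ⟨w, hwW, hws⟩ := Finset.mem_image.1 hstar
        have : w = star a := by
          have h1 : star (star w) = star a := by rw [hws]
          rwa [h.star_invol] at h1
        exact this ▸ hwW
      · exact absurd hcov hnotco
    have hsA : s ∉ A := by
      intro hsA
      have hxA : x ∈ A := by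
        rw [hA]
        exact subset_cl h htfinE hxt
      exact not_pair_mem h (cl_mem h htfinE) (hA ▸ htne) hsA (hxdef ▸ hxA)
    have hsW : s ∉ W := fun hsW => hsA (hWA hsW)
    have hsWs : s ∉ W.image star := by
      intro hmem
      obtain ⟨w, hwW, hws⟩ := Finset.mem_image.1 hmem
      have : w = x := by
        have h1 : star (star w) = star s := by rw [hws]
        rwa [h.star_invol] at h1
      exact hxW (this ▸ hwW)
    set A' := cl E L (insert s W) with hA'
    have hA'E : A' ≠ E := by
      intro hA'Eq
      rw [hA'] at hA'Eq
      rcases step_refined h (cl_mem h hufinE) hWE hsE hsW hA'Eq with hst | hcov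
      · exact hsWs hst
      · exact hnotco hcov
    have hcovA' : CovIn L W A' := by
      rcases step h (cl_mem h hufinE) hWE hsE hsW with hc | hc
      · exact hc
      · exact absurd hc hA'E
    have haA' : a ∉ A' := by
      intro haA'
      exact not_pair_mem h hcovA'.2.1 hA'E haA' (hcovA'.2.2.1.1 hstarA)
    refine ⟨a :: s :: u, ⟨?_, ?_, huoil⟩, ?_, ?_⟩
    · have hcleq : cl E L (s :: u).toFinset = A' := by
        rw [List.toFinset_cons, hA', hW]
        exact (cl_insert_cl h hufinE hsE).symm
      rw [hcleq]
      exact haA'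
    · exact hsW
    · intro y hy
      rcases List.mem_cons.1 hy with rfl | hy
      · exact haE
      · rcases List.mem_cons.1 hy with rfl | hy
        · exact hsE
        · exact huE y hy
    · rw [List.toFinset_cons, List.toFinset_cons, hKeq, Finset.insert_comm]

end CnAux

set_option linter.unusedSectionVars false
namespace CnAux

variable {α : Type*} [DecidableEq α] [Fintype α]
variable {star : α → α} {E : Finset α} {L : Set (Finset α)}

lemma flat_adm_mem (h : IsCnLattice star E L) (hnd : ¬ CovIn L ∅ E) (hE0 : E ≠ ∅)
    {F : Finset α} (hflat : IsFlatOf {S | IndepIn L S} E F) (hadm : Admissible star F) :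
    F ∈ L := by
  classical
  obtain ⟨hFE, hflatx⟩ := hflat
  by_cases hFeq : F = E
  · rw [hFeq]; exact h.ground_mem
  set m := matRank {S | IndepIn L S} F with hm
  obtain ⟨l₀, hl₀, hl₀E, hl₀sub, hl₀len⟩ := exists_max_oil h hnd hFE
  have hl₀fin : l₀.toFinset ⊆ E := fun y hy => hl₀E y (List.mem_toFinset.1 hy)
  set X := cl E L l₀.toFinset with hX
  have hFX : F ⊆ X := max_oil_spans h hFE hl₀ hl₀E hl₀sub hl₀len
  have hclF : cl E L F = X := by
    apply le_antisymm
    · exact cl_subset h hFE (cl_mem h hl₀fin) hFX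
    · exact cl_mono h hl₀sub hFE
  -- trimmed witness of rank `m+1` inside `insert x F`, for `x ∈ E \ F`
  have trim_step : ∀ x : α, x ∈ E → x ∉ F →
      ∃ j : List α, OIL E L j ∧ (∀ y ∈ j, y ∈ E) ∧ j.toFinset ⊆ insert x F ∧
        j.length = m + 1 ∧ x ∈ j.toFinset ∧ j.toFinset.card = m + 1 := by
    intro x hxE hxF
    have hlt : m < matRank {S | IndepIn L S} (insert x F) := hflatx x hxE hxF
    obtain ⟨l', hl', hl'E, hl'sub, hl'len⟩ :=
      exists_max_oil h hnd (Finset.insert_subset hxE hFE)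
    obtain ⟨j, hj, hjE, hjsub, hjlen⟩ := oil_trim hl' hl'E (n := m + 1) (by omega)
    have hjcard : j.toFinset.card = m + 1 := by
      rw [List.toFinset_card_of_nodup (oil_nodup h hj hjE), hjlen]
    have hjsub2 : j.toFinset ⊆ insert x F := hjsub.trans hl'sub
    have hxj : x ∈ j.toFinset := by
      by_contra hxj
      have hsubF : j.toFinset ⊆ F := by
        intro y hy
        rcases Finset.mem_insert.1 (hjsub2 hy) with rfl | hyF
        · exact absurd hy hxj
        · exact hyF
      have := card_le_matRank (oil_indepIn h hj hjE) hsubF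
      rw [hjcard] at this
      omega
    exact ⟨j, hj, hjE, hjsub2, hjlen, hxj, hjcard⟩
  -- common facts about the erased list
  have erase_facts : ∀ x : α, x ∈ E → x ∉ F →
      ∀ j : List α, OIL E L j → (∀ y ∈ j, y ∈ E) → j.toFinset ⊆ insert x F →
        j.length = m + 1 → x ∈ j.toFinset →
        j.toFinset.erase x ⊆ F ∧ (j.toFinset.erase x).card = m ∧
          F ⊆ cl E L (j.toFinset.erase x) := by
    intro x hxE hxF j hj hjE hjsub hjlen hxj
    have hjnd : j.Nodup := oil_nodup h hj hjE
    have hKF : j.toFinset.erase x ⊆ F := by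
      intro y hy
      obtain ⟨hyx, hyJ⟩ := Finset.mem_erase.1 hy
      rcases Finset.mem_insert.1 (hjsub hyJ) with rfl | hyF
      · exact absurd rfl hyx
      · exact hyF
    have hjcard : j.toFinset.card = m + 1 := by
      rw [List.toFinset_card_of_nodup hjnd, hjlen]
    have hKcard : (j.toFinset.erase x).card = m := by
      rw [Finset.card_erase_of_mem hxj, hjcard]
      omega
    have hkoil : OIL E L (j.erase x) := oil_erase h hj hjE x
    have hkE : ∀ y ∈ j.erase x, y ∈ E := fun y hy => hjE y (List.mem_of_mem_erase hy)
    have hkfin : (j.erase x).toFinset = j.toFinset.erase x := toFinset_erase' hjnd x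
    have hklen : (j.erase x).length = m := by
      rw [List.length_erase_of_mem (List.mem_toFinset.1 hxj), hjlen]
      omega
    have hFK : F ⊆ cl E L (j.toFinset.erase x) := by
      rw [← hkfin]
      exact max_oil_spans h hFE hkoil hkE (hkfin ▸ hKF) (hklen.trans hm)
    exact ⟨hKF, hKcard, hFK⟩
  by_cases hXE : X = E
  · -- impossible: use the star swap lemmas
    exfalso
    have hFne : F.Nonempty := by
      rcases F.eq_empty_or_nonempty with rfl | hFne
      · rw [cl_empty h] at hclF
        exact ((hE0 (hclF.trans hXE).symm)).elim
      · exact hFne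
    obtain ⟨s, hs⟩ := hFne
    have hsE : s ∈ E := hFE hs
    have hxE : star s ∈ E := h.star_mem s hsE
    have hxF : star s ∉ F := by
      intro hxF
      have hmem : star s ∈ F ∩ F.image star :=
        Finset.mem_inter.2 ⟨hxF, Finset.mem_image.2 ⟨s, hs, rfl⟩⟩
      rw [hadm] at hmem
      exact Finset.notMem_empty _ hmem
    obtain ⟨j, hj, hjE, hjsub, hjlen, hxj, hjcard⟩ := trim_step (star s) hxE hxF
    obtain ⟨hKF, hKcard, hFK⟩ := erase_facts (star s) hxE hxF j hj hjE hjsub hjlen hxj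
    have hclK : cl E L (j.toFinset.erase (star s)) = E := by
      apply le_antisymm cl_subset_ground
      have h1 : cl E L F ⊆ cl E L (j.toFinset.erase (star s)) :=
        cl_subset h hFE (cl_mem h (hKF.trans hFE)) hFK
      rw [hclF, hXE] at h1
      exact h1
    by_cases hsj : s ∈ j.toFinset
    · exact V5 h hj hjE hsj hxj hclK
    · obtain ⟨l, hloil, hlE, hlfin⟩ := V1 h hj hjE hsE hxj hsj hclK
      have hlind : IndepIn L l.toFinset := oil_indepIn h hloil hlE
      have hlsubF : l.toFinset ⊆ F := by
        rw [hlfin]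
        exact Finset.insert_subset hs hKF
      have hlcard : l.toFinset.card = m + 1 := by
        rw [hlfin, Finset.card_insert_of_notMem (fun hsK => hsj (Finset.mem_of_mem_erase hsK)),
          hKcard]
      have := card_le_matRank hlind hlsubF
      rw [hlcard] at this
      omega
  · -- X ≠ E : F equals the member X
    have hXF : X ⊆ F := by
      by_contra hnsub
      obtain ⟨x, hxX, hxF⟩ := Finset.not_subset.1 hnsub
      have hxE : x ∈ E := cl_subset_ground (hX ▸ hxX)
      obtain ⟨j, hj, hjE, hjsub, hjlen, hxj, hjcard⟩ := trim_step x hxE hxF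
      obtain ⟨hKF, hKcard, hFK⟩ := erase_facts x hxE hxF j hj hjE hjsub hjlen hxj
      have hjnd : j.Nodup := oil_nodup h hj hjE
      have hkfin : (j.erase x).toFinset = j.toFinset.erase x := toFinset_erase' hjnd x
      have hkoil : OIL E L (j.erase x) := oil_erase h hj hjE x
      have hkE : ∀ y ∈ j.erase x, y ∈ E := fun y hy => hjE y (List.mem_of_mem_erase hy)
      have hklen : (j.erase x).length = m := by
        rw [List.length_erase_of_mem (List.mem_toFinset.1 hxj), hjlen]
        omega
      have hKfinE : j.toFinset.erase x ⊆ E := hKF.trans hFE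
      have hclK : cl E L (j.toFinset.erase x) = X := by
        apply le_antisymm
        · rw [← hclF]
          exact cl_mono h hKF hFE
        · rw [← hclF]
          exact cl_subset h hFE (cl_mem h hKfinE) hFK
      have hclJ : cl E L j.toFinset = X := by
        have hins : j.toFinset = insert x (j.toFinset.erase x) :=
          (Finset.insert_erase hxj).symm
        rw [hins, ← cl_insert_cl h hKfinE hxE, hclK]
        exact (cl_insert_of_mem_cl h (h.subset_ground X (hX ▸ cl_mem h hl₀fin))
          (by rw [cl_of_mem h (hX ▸ cl_mem h hl₀fin)]; exact hxX)).trans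
          (cl_of_mem h (hX ▸ cl_mem h hl₀fin))
      have hlen := oil_length_eq h hj hkoil hjE hkE
        (by rw [hclJ, ← hclK, hkfin]) (by rw [hclJ]; exact hXE)
      rw [hjlen, hklen] at hlen
      omega
    have : F = X := le_antisymm hFX hXF
    rw [this, hX]
    exact cl_mem h hl₀fin

/-- degenerate case: in `L = {∅, E}` every independent subset of `E` has at most
one element. -/
lemma degen_indep_card (h : IsCnLattice star E L) (hcov : CovIn L ∅ E) {B : Finset α}
    (hB : B ⊆ E) (hI : IndepIn L B) : B.card ≤ 1 := by
  classical
  by_contra hcard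
  push_neg at hcard
  obtain ⟨d, hd, e, he, hde⟩ := Finset.one_lt_card.1 hcard
  obtain ⟨ω, hST, hGNBB⟩ := hI
  have key : ∀ a b : α, a ∈ B → b ∈ B → ω a b → False := by
    intro a b ha hb hab
    apply hGNBB {b} (Finset.singleton_subset_iff.2 hb)
    refine ⟨⟨b, Finset.mem_singleton_self b⟩, ?_, a, ?_, ?_⟩
    · unfold DisjointIn
      have : atomsMeeting L {b} = {E} := by
        ext A
        simp only [atomsMeeting, Set.mem_setOf_eq, Set.mem_singleton_iff]
        constructor
        · rintro ⟨hatom, -⟩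
          rcases hcov.2.2.2 A hatom.2.1 (Finset.empty_subset _)
              (h.subset_ground A hatom.2.1) with hc | hc
          · exact absurd (hc ▸ hatom.2.2.1) (by simp)
          · exact hc
        · rintro rfl
          exact ⟨hcov, ⟨b, Finset.mem_inter.2 ⟨hB hb, Finset.mem_singleton_self b⟩⟩⟩
      rw [this, Set.ncard_singleton, Finset.card_singleton]
    · intro y hy
      rw [Finset.mem_singleton] at hy
      exact hy ▸ hab
    · intro X hX hbX
      rcases hcov.2.2.2 X hX (Finset.empty_subset _) (h.subset_ground X hX) with hc | hc
      · exact absurd (hc ▸ hbX (Finset.mem_singleton_self b)) (Finset.notMem_empty b)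
      · rw [hc]; exact hB ha
  rcases (haveI := hST; trichotomous_of ω d e) with hω | heq | hω
  · exact key d e hd he hω
  · exact hde heq
  · exact key e d he hd hω

lemma singleton_indep (h : IsCnLattice star E L) {x : α} (hx : x ∈ E) :
    IndepIn L ({x} : Finset α) := by
  have hoil : OIL E L [x] := by
    refine ⟨?_, trivial⟩
    rw [show ([] : List α).toFinset = ∅ from rfl, cl_empty h]
    exact Finset.notMem_empty x
  have := oil_indepIn h hoil (by intro y hy; rw [List.mem_singleton] at hy; exact hy ▸ hx)
  simpa using this

lemma matRank_empty (L : Set (Finset α)) : matRank {S | IndepIn L S} (∅ : Finset α) = 0 := by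
  have h0 : (0:ℕ) ∈ {k | ∃ I ∈ {S | IndepIn L S}, I ⊆ (∅ : Finset α) ∧ I.card = k} :=
    ⟨∅, indepIn_empty, Finset.empty_subset _, Finset.card_empty⟩
  apply Nat.le_zero.1
  apply csSup_le ⟨0, h0⟩
  rintro k ⟨I, -, hsub, rfl⟩
  simp [Finset.subset_empty.1 hsub]

end CnAux


/-- If `L` is a `C_n` lattice and `P` is the induced geometric
lattice on the ground set `J` (the lattice of flats of the matroid whose independent
sets are the NBB sets of `L`), then `L` consists exactly of the admissible flats of
`P` together with `J` itself: `L = (P ∩ P^ad(J)) ∪ {J}`. -/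
theorem cn_eq_admissible_flats (star : α → α) (E : Finset α) (L : Set (Finset α))
    (h : IsCnLattice star E L) :
    L = {F | IsFlatOf {S | IndepIn L S} E F ∧ Admissible star F} ∪ {E} := by
  classical
  ext A
  simp only [Set.mem_union, Set.mem_setOf_eq, Set.mem_singleton_iff]
  by_cases hE0 : E = ∅
  · subst hE0
    constructor
    · intro hA
      right
      exact Finset.subset_empty.1 (h.subset_ground A hA)
    · rintro (⟨⟨hsub, -⟩, -⟩ | rfl)
      · rw [Finset.subset_empty.1 hsub]; exact h.empty_mem
      · exact h.ground_mem
  by_cases hnd : CovIn L ∅ E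
  · -- degenerate case : `L = {∅, E}`
    have hmem2 : ∀ B ∈ L, B = ∅ ∨ B = E := fun B hB =>
      hnd.2.2.2 B hB (Finset.empty_subset _) (h.subset_ground B hB)
    constructor
    · intro hA
      rcases hmem2 A hA with rfl | rfl
      · left
        refine ⟨⟨Finset.empty_subset _, ?_⟩, by simp [Admissible]⟩
        intro x hxE _
        rw [CnAux.matRank_empty]
        have h1 := CnAux.card_le_matRank (CnAux.singleton_indep h hxE)
          (by simp : ({x} : Finset α) ⊆ insert x ∅)
        simp only [Finset.card_singleton] at h1
        omega
      · right; rfl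
    · rintro (⟨⟨hsub, hflat⟩, hadm⟩ | rfl)
      · rcases A.eq_empty_or_nonempty with rfl | hAne
        · exact h.empty_mem
        · by_cases hAE : A = E
          · rw [hAE]; exact h.ground_mem
          exfalso
          obtain ⟨y, hyE, hyA⟩ := Finset.exists_of_ssubset (lt_of_le_of_ne hsub hAE)
          have hlt := hflat y hyE hyA
          obtain ⟨f, hf⟩ := hAne
          have h1 : 1 ≤ matRank {S | IndepIn L S} A := by
            have := CnAux.card_le_matRank (CnAux.singleton_indep h (hsub hf))
              (Finset.singleton_subset_iff.2 hf)
            simpa using this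
          have h2 : matRank {S | IndepIn L S} (insert y A) ≤ 1 := by
            have h0 : (0:ℕ) ∈ {k | ∃ I ∈ {S | IndepIn L S}, I ⊆ insert y A ∧ I.card = k} :=
              ⟨∅, CnAux.indepIn_empty, Finset.empty_subset _, Finset.card_empty⟩
            apply csSup_le ⟨0, h0⟩
            rintro k ⟨I, hI, hsubI, rfl⟩
            exact CnAux.degen_indep_card h hnd
              (hsubI.trans (Finset.insert_subset hyE hsub)) hI
          omega
      · exact h.ground_mem
  · -- main case
    constructor
    · intro hA
      by_cases hAE : A = E
      · right; exact hAE
      · left; exact ⟨CnAux.mem_isFlat h hnd hA, h.admissible A hA hAE⟩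
    · rintro (⟨hflat, hadm⟩ | rfl)
      · exact CnAux.flat_adm_mem h hnd hE0 hflat hadm
      · exact h.ground_mem
end

section
/- For any admissible subset A of J and any C_n lattice 𝓛, the independent sets of 𝓛 contained in A coincide with the independent sets of the restricted lattice 𝓛 ∩ A = {X ∩ A : X ∈ 𝓛} with linear orders restricted to A: I(𝓛,P) ∩ P(A) = I(𝓛 ∩ A, P|_A). -/
open Finset

variable {α : Type*} [DecidableEq α] [Fintype α]

set_option linter.unusedSectionVars false

section Aux

variable {star : α → α} {E : Finset α} {L : Set (Finset α)}

/-- Every element of the ground set lies in some atom. -/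
lemma cn_atom_exists (h : IsCnLattice star E L) {x : α} (hx : x ∈ E) :
    ∃ B, IsAtomIn L B ∧ x ∈ B := by
  by_cases hd : CovIn L ∅ E
  · exact ⟨E, hd, hx⟩
  · have := (h.covers_union ∅ h.empty_mem hd x).mp
    simp only [Finset.image_empty, Finset.sdiff_empty] at this
    exact this hx

/-- Distinct atoms are disjoint. -/
lemma cn_atom_disjoint (h : IsCnLattice star E L) {B B' : Finset α}
    (hB : IsAtomIn L B) (hB' : IsAtomIn L B') (hne : B ≠ B') : B ∩ B' = ∅ := by
  by_cases hd : CovIn L ∅ E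
  · have hBE : B = E := by
      rcases hd.2.2.2 B hB.2.1 (empty_subset _) (h.subset_ground _ hB.2.1) with h1 | h1
      · exact absurd hB.2.2.1 (by simp [h1])
      · exact h1
    have hB'E : B' = E := by
      rcases hd.2.2.2 B' hB'.2.1 (empty_subset _) (h.subset_ground _ hB'.2.1) with h1 | h1
      · exact absurd hB'.2.2.1 (by simp [h1])
      · exact h1
    exact absurd (hBE.trans hB'E.symm) hne
  · exact h.covers_inter ∅ h.empty_mem hd B B' hB hB' hne

/-- If an atom `B` meets a member `Y` of `L`, then `B ⊆ Y`. -/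
lemma cn_atom_subset (h : IsCnLattice star E L) {B Y : Finset α}
    (hB : IsAtomIn L B) (hY : Y ∈ L) {x : α} (hxB : x ∈ B) (hxY : x ∈ Y) : B ⊆ Y := by
  have hZ : Y ∩ B ∈ L := h.inter_mem Y hY B hB.2.1
  rcases hB.2.2.2 (Y ∩ B) hZ (empty_subset _) (inter_subset_right) with h1 | h1
  · exact absurd h1 (Finset.nonempty_iff_ne_empty.mp ⟨x, mem_inter.mpr ⟨hxY, hxB⟩⟩)
  · exact Finset.inter_eq_right.mp h1

/-- The trace of an atom on `A` is an atom of the restricted family. -/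
lemma cn_atom_restrict (h : IsCnLattice star E L) (A : Finset α) {B : Finset α}
    (hB : IsAtomIn L B) (hne : (B ∩ A).Nonempty) :
    IsAtomIn {X | ∃ Y ∈ L, X = Y ∩ A} (B ∩ A) := by
  refine ⟨⟨∅, h.empty_mem, by simp⟩, ⟨B, hB.2.1, rfl⟩, ?_, ?_⟩
  · exact Finset.empty_ssubset.mpr hne
  · rintro C ⟨Y, hY, rfl⟩ - hCsub
    rcases Finset.eq_empty_or_nonempty (Y ∩ A) with he | ⟨x, hx⟩
    · exact Or.inl he
    · have hxB : x ∈ B := (mem_inter.mp (hCsub hx)).1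
      have hBY : B ⊆ Y := cn_atom_subset h hB hY hxB (mem_inter.mp hx).1
      exact Or.inr (Finset.Subset.antisymm hCsub
        (Finset.inter_subset_inter hBY (Finset.Subset.refl A)))

/-- Every atom of the restricted family is the trace of an atom of `L`. -/
lemma cn_atom_restrict_rev (h : IsCnLattice star E L) {A : Finset α} (hA : A ⊆ E)
    {X : Finset α} (hX : IsAtomIn {X | ∃ Y ∈ L, X = Y ∩ A} X) :
    ∃ B, IsAtomIn L B ∧ X = B ∩ A := by
  obtain ⟨Y, hY, rfl⟩ := hX.2.1
  obtain ⟨x, hx⟩ : (Y ∩ A).Nonempty := Finset.empty_ssubset.mp hX.2.2.1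
  have hxY : x ∈ Y := (mem_inter.mp hx).1
  have hxA : x ∈ A := (mem_inter.mp hx).2
  obtain ⟨B, hB, hxB⟩ := cn_atom_exists h (hA hxA)
  have hBY : B ⊆ Y := cn_atom_subset h hB hY hxB hxY
  rcases hX.2.2.2 (B ∩ A) ⟨B, hB.2.1, rfl⟩ (empty_subset _)
      (Finset.inter_subset_inter hBY (Finset.Subset.refl A)) with h1 | h1
  · exact absurd h1 (Finset.nonempty_iff_ne_empty.mp ⟨x, mem_inter.mpr ⟨hxB, hxA⟩⟩)
  · exact ⟨B, hB, h1.symm⟩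

lemma cn_atomsMeeting_restrict (h : IsCnLattice star E L) {A : Finset α} (hA : A ⊆ E)
    {D : Finset α} (hD : D ⊆ A) :
    atomsMeeting {X | ∃ Y ∈ L, X = Y ∩ A} D = (· ∩ A) '' atomsMeeting L D := by
  ext X
  constructor
  · rintro ⟨hX, hXD⟩
    obtain ⟨B, hB, rfl⟩ := cn_atom_restrict_rev h hA hX
    refine ⟨B, ⟨hB, ?_⟩, rfl⟩
    obtain ⟨x, hx⟩ := hXD
    exact ⟨x, mem_inter.mpr ⟨(mem_inter.mp (mem_inter.mp hx).1).1, (mem_inter.mp hx).2⟩⟩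
  · rintro ⟨B, ⟨hB, hBD⟩, rfl⟩
    obtain ⟨x, hx⟩ := hBD
    have hxA : x ∈ A := hD (mem_inter.mp hx).2
    refine ⟨cn_atom_restrict h A hB ⟨x, mem_inter.mpr ⟨(mem_inter.mp hx).1, hxA⟩⟩, ?_⟩
    exact ⟨x, mem_inter.mpr ⟨mem_inter.mpr ⟨(mem_inter.mp hx).1, hxA⟩, (mem_inter.mp hx).2⟩⟩

lemma cn_disjointIn_restrict (h : IsCnLattice star E L) {A : Finset α} (hA : A ⊆ E)
    {D : Finset α} (hD : D ⊆ A) :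
    DisjointIn {X | ∃ Y ∈ L, X = Y ∩ A} D ↔ DisjointIn L D := by
  unfold DisjointIn
  rw [cn_atomsMeeting_restrict h hA hD, Set.ncard_image_of_injOn]
  rintro B ⟨hB, hBD⟩ B' ⟨hB', hB'D⟩ hBB'
  by_contra hne
  have hdisj := cn_atom_disjoint h hB hB' hne
  obtain ⟨x, hx⟩ := hBD
  have hxA : x ∈ A := hD (mem_inter.mp hx).2
  have hxBA : x ∈ B ∩ A := mem_inter.mpr ⟨(mem_inter.mp hx).1, hxA⟩
  rw [show B ∩ A = B' ∩ A from hBB'] at hxBA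
  have : x ∈ B ∩ B' := mem_inter.mpr ⟨(mem_inter.mp hx).1, (mem_inter.mp hxBA).1⟩
  simp [hdisj] at this

lemma joinIn_restrict_subset {A D : Finset α} (hD : D ⊆ A) :
    joinIn {X | ∃ Y ∈ L, X = Y ∩ A} D ⊆ joinIn L D := by
  intro x hx Y hY hDY
  have := hx (Y ∩ A) ⟨Y, hY, rfl⟩ (Finset.subset_inter hDY hD)
  exact (mem_inter.mp this).1

lemma joinIn_restrict_rev {A D : Finset α} (hD : D ⊆ A) {x : α} (hxA : x ∈ A)
    (hx : x ∈ joinIn L D) : x ∈ joinIn {X | ∃ Y ∈ L, X = Y ∩ A} D := by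
  rintro X ⟨Y, hY, rfl⟩ hDX
  exact mem_inter.mpr ⟨hx Y hY (hDX.trans inter_subset_left), hxA⟩

/-- Modify a strict total order so that all of `A` comes before its complement,
keeping the order within `A` and within the complement. -/
def omegaMod (A : Finset α) (ω : α → α → Prop) (a b : α) : Prop :=
  (a ∈ A ∧ b ∉ A) ∨ ((a ∈ A ↔ b ∈ A) ∧ ω a b)

lemma omegaMod_isSTO (A : Finset α) {ω : α → α → Prop} (hω : IsStrictTotalOrder α ω) :
    IsStrictTotalOrder α (omegaMod A ω) := by
  have htri : ∀ a b, omegaMod A ω a b ∨ a = b ∨ omegaMod A ω b a := by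
    intro a b
    by_cases haA : a ∈ A <;> by_cases hbA : b ∈ A
    · rcases (by have := hω.trichotomous a b; tauto : ω a b ∨ a = b ∨ ω b a) with h1 | h1 | h1
      · exact Or.inl (Or.inr ⟨by tauto, h1⟩)
      · exact Or.inr (Or.inl h1)
      · exact Or.inr (Or.inr (Or.inr ⟨by tauto, h1⟩))
    · exact Or.inl (Or.inl ⟨haA, hbA⟩)
    · exact Or.inr (Or.inr (Or.inl ⟨hbA, haA⟩))
    · rcases (by have := hω.trichotomous a b; tauto : ω a b ∨ a = b ∨ ω b a) with h1 | h1 | h1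
      · exact Or.inl (Or.inr ⟨by tauto, h1⟩)
      · exact Or.inr (Or.inl h1)
      · exact Or.inr (Or.inr (Or.inr ⟨by tauto, h1⟩))
  have hirr : ∀ a, ¬ omegaMod A ω a a := by
    rintro a (⟨h1, h2⟩ | ⟨-, h2⟩)
    · exact h2 h1
    · exact hω.irrefl a h2
  have htrans : ∀ a b c, omegaMod A ω a b → omegaMod A ω b c → omegaMod A ω a c := by
    rintro a b c (⟨ha, hb⟩ | ⟨hab, h1⟩) (⟨hb', hc⟩ | ⟨hbc, h2⟩)
    · exact absurd hb' hb
    · exact Or.inl ⟨ha, fun hc => hb (hbc.mpr hc)⟩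
    · exact Or.inl ⟨hab.mpr hb', hc⟩
    · exact Or.inr ⟨hab.trans hbc, hω.trans a b c h1 h2⟩
  exact { trichotomous := fun a b h1 h2 => ((htri a b).resolve_left h1).resolve_right h2, irrefl := hirr, trans := htrans }

lemma omegaMod_of_mem {A : Finset α} {ω : α → α → Prop} {a b : α}
    (hb : b ∈ A) (hab : omegaMod A ω a b) : a ∈ A ∧ ω a b := by
  rcases hab with ⟨ha, hb'⟩ | ⟨hiff, h1⟩
  · exact absurd hb hb'
  · exact ⟨hiff.mpr hb, h1⟩

end Aux

/-- For any admissible subset `A` of the ground set and any `C_n`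
lattice `L`, the independent sets of `L` contained in `A` coincide with the
independent sets of the restricted lattice `L ∩ A = {X ∩ A : X ∈ L}`:
`I(L,P) ∩ P(A) = I(L ∩ A, P|_A)`. -/
theorem cn_indep_restrict (star : α → α) (E : Finset α) (L : Set (Finset α))
    (h : IsCnLattice star E L) (A : Finset α) (hA : A ⊆ E)
    (hadm : Admissible star A) :
    ∀ S : Finset α, S ⊆ A →
      (IndepIn L S ↔ IndepIn {X | ∃ Y ∈ L, X = Y ∩ A} S) := by
  intro S hS
  constructor
  · rintro ⟨ω, hω, hN⟩
    refine ⟨ω, hω, ?_⟩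
    intro D hD hGBB
    obtain ⟨hDne, hDdisj, a, ha, haj⟩ := hGBB
    have hDA : D ⊆ A := hD.trans hS
    exact hN D hD ⟨hDne, (cn_disjointIn_restrict h hA hDA).mp hDdisj, a, ha,
      joinIn_restrict_subset hDA haj⟩
  · rintro ⟨ω, hω, hN⟩
    refine ⟨omegaMod A ω, omegaMod_isSTO A hω, ?_⟩
    intro D hD hGBB
    obtain ⟨hDne, hDdisj, a, ha, haj⟩ := hGBB
    have hDA : D ⊆ A := hD.trans hS
    obtain ⟨d0, hd0⟩ := hDne
    have haA : a ∈ A := (omegaMod_of_mem (hDA hd0) (ha d0 hd0)).1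
    exact hN D hD ⟨⟨d0, hd0⟩, (cn_disjointIn_restrict h hA hDA).mpr hDdisj, a,
      fun d hd => (omegaMod_of_mem (hDA hd) (ha d hd)).2,
      joinIn_restrict_rev hDA haA haj⟩
end
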